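/- arXiv:1201.0429 — 4 statements merged into one kernel-verified Lean document; each statement's English description precedes it below -/
import Mathlib

section
/- There is an absolute constant C > 0 with the following property: let δ > 0 and let Z_1, ..., Z_R be independent real-valued random variables such that P(Z_r > 0) ≥ δ and P(Z_r < 0) ≥ δ for all r = 1, ..., R. Then P(S⁻(Z_1, ..., Z_R) ≤ δR/5) ≤ C·e^{−δR/3}, uniformly in δ and R. -/
open scoped Classical

/-- `S⁻(a₁, …, aₙ)`: the number of sign changes in a finite sequence of reals,
after deleting all zero terms. -/
noncomputable def signChangesList (l : List ℝ) : ℕ :=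
  let l' := l.filter (fun x => decide (x ≠ 0))
  (l'.zip l'.tail).countP (fun q => decide (q.1 * q.2 < 0))

/-- `S⁻` for a finite sequence given as a function `Fin n → ℝ`. -/
noncomputable def signChangesFin {n : ℕ} (a : Fin n → ℝ) : ℕ :=
  signChangesList (List.ofFn a)

open MeasureTheory ProbabilityTheory Filter

open scoped ENNReal

/-- core counting function on already-filtered lists -/
noncomputable def scCore (m : List ℝ) : ℕ :=
  (m.zip m.tail).countP (fun q => decide (q.1 * q.2 < 0))

lemma signChangesList_eq (l : List ℝ) :
    signChangesList l = scCore (l.filter (fun x => decide (x ≠ 0))) := rfl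

lemma scCore_nil : scCore [] = 0 := rfl

lemma scCore_singleton (a : ℝ) : scCore [a] = 0 := rfl

lemma scCore_cons_cons (a b : ℝ) (r : List ℝ) :
    scCore (a :: b :: r) = (if a * b < 0 then 1 else 0) + scCore (b :: r) := by
  simp [scCore, List.countP_cons]
  by_cases h : a * b < 0 <;> simp [h] <;> omega

lemma filter_cons_ne (x : ℝ) (hx : x ≠ 0) (l : List ℝ) :
    (x :: l).filter (fun y => decide (y ≠ 0)) = x :: l.filter (fun y => decide (y ≠ 0)) := by
  simp [List.filter_cons, hx]

lemma filter_cons_zero (l : List ℝ) :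
    ((0:ℝ) :: l).filter (fun y => decide (y ≠ 0)) = l.filter (fun y => decide (y ≠ 0)) := by
  simp [List.filter_cons]

lemma signChangesList_zero_cons (l : List ℝ) :
    signChangesList ((0:ℝ) :: l) = signChangesList l := by
  simp [signChangesList_eq, filter_cons_zero]

/-- L1: prepending one element increases the count by at most 1. -/
lemma signChangesList_cons_le (x : ℝ) (l : List ℝ) :
    signChangesList (x :: l) ≤ 1 + signChangesList l := by
  by_cases hx : x = 0
  · subst hx; rw [signChangesList_zero_cons]; omega
  · rw [signChangesList_eq, signChangesList_eq, filter_cons_ne x hx]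
    cases hf : l.filter (fun y => decide (y ≠ 0)) with
    | nil => simp [scCore_singleton, scCore_nil]
    | cons b r =>
        rw [scCore_cons_cons]
        by_cases h : x * b < 0 <;> simp [h]

/-- L2: head recursion. -/
lemma signChangesList_cons_cons (c x : ℝ) (hc : c ≠ 0) (l : List ℝ) :
    signChangesList (c :: x :: l) =
      if x = 0 then signChangesList (c :: l)
      else (if c * x < 0 then 1 else 0) + signChangesList (x :: l) := by
  by_cases hx : x = 0
  · subst hx
    rw [if_pos rfl, signChangesList_eq, signChangesList_eq, filter_cons_ne c hc,
      filter_cons_ne c hc, filter_cons_zero]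
  · rw [if_neg hx, signChangesList_eq, signChangesList_eq, filter_cons_ne c hc,
      filter_cons_ne x hx, scCore_cons_cons]

/-- L3': the anchor matters only through its sign. -/
lemma signChangesList_anchor_congr (c d : ℝ) (hc : c ≠ 0) (hd : d ≠ 0)
    (hsign : 0 < c ↔ 0 < d) (l : List ℝ) :
    signChangesList (c :: l) = signChangesList (d :: l) := by
  rw [signChangesList_eq, signChangesList_eq, filter_cons_ne c hc, filter_cons_ne d hd]
  cases hf : l.filter (fun y => decide (y ≠ 0)) with
  | nil => simp [scCore_singleton]
  | cons b r =>
      rw [scCore_cons_cons, scCore_cons_cons]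
      have : c * b < 0 ↔ d * b < 0 := by
        rcases lt_trichotomy c 0 with h | h | h
        · have hd' : d < 0 := by
            rcases lt_trichotomy d 0 with h2 | h2 | h2
            · exact h2
            · exact absurd h2 hd
            · exact absurd (hsign.mpr h2) (not_lt.mpr h.le)
          constructor <;> intro hh <;> nlinarith
        · exact absurd h hc
        · have hd' : 0 < d := hsign.mp h
          constructor <;> intro hh <;> nlinarith
      rw [if_congr this rfl rfl]

lemma signChangesList_singleton (c : ℝ) : signChangesList [c] = 0 := by
  rw [signChangesList_eq]
  by_cases hc : c = 0
  · subst hc; simp [List.filter, scCore_nil]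
  · rw [filter_cons_ne c hc]; simp [List.filter, scCore_singleton]

lemma measurable_anchored :
    ∀ (n : ℕ) (c : ℝ), c ≠ 0 →
      Measurable (fun a : Fin n → ℝ => signChangesList (c :: List.ofFn a)) := by
  intro n
  induction n with
  | zero =>
      intro c _
      have : (fun a : Fin 0 → ℝ => signChangesList (c :: List.ofFn a))
          = fun _ => signChangesList [c] := by
        funext a; simp
      rw [this]; exact measurable_const
  | succ n IH =>
      intro c hc
      have key : ∀ a : Fin (n+1) → ℝ,
          signChangesList (c :: List.ofFn a) =
            if a 0 = 0 then signChangesList (c :: List.ofFn (fun i : Fin n => a i.succ))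
            else (if c * a 0 < 0 then 1 else 0) +
              (if 0 < a 0 then signChangesList (1 :: List.ofFn (fun i : Fin n => a i.succ))
               else signChangesList (-1 :: List.ofFn (fun i : Fin n => a i.succ))) := by
        intro a
        rw [List.ofFn_succ, signChangesList_cons_cons c (a 0) hc]
        by_cases h0 : a 0 = 0
        · simp [h0]
        · rw [if_neg h0, if_neg h0]
          congr 1
          by_cases hpos : 0 < a 0
          · rw [if_pos hpos]
            exact signChangesList_anchor_congr _ _ h0 one_ne_zero (by simp [hpos]) _
          · rw [if_neg hpos]
            exact signChangesList_anchor_congr _ _ h0 (by norm_num)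
              (by constructor <;> intro h <;> [exact absurd h hpos; linarith]) _
      simp only [key]
      have htail : Measurable (fun a : Fin (n+1) → ℝ => fun i : Fin n => a i.succ) :=
        measurable_pi_lambda _ (fun i => measurable_pi_apply _)
      have h0m : MeasurableSet {a : Fin (n+1) → ℝ | a 0 = 0} :=
        (measurable_pi_apply 0) (measurableSet_singleton 0)
      apply Measurable.ite h0m ((IH c hc).comp htail)
      apply Measurable.add
      · apply Measurable.ite _ measurable_const measurable_const
        exact measurableSet_lt (measurable_const.mul (measurable_pi_apply 0)) measurable_const
      · apply Measurable.ite
        · exact measurableSet_lt measurable_const (measurable_pi_apply 0)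
        · exact (IH 1 one_ne_zero).comp htail
        · exact (IH (-1) (by norm_num)).comp htail

lemma measurable_unanchored (n : ℕ) :
    Measurable (fun a : Fin n → ℝ => signChangesList (List.ofFn a)) := by
  cases n with
  | zero =>
      have : (fun a : Fin 0 → ℝ => signChangesList (List.ofFn a))
          = fun _ => signChangesList [] := by funext a; simp
      rw [this]; exact measurable_const
  | succ n =>
      have key : ∀ a : Fin (n+1) → ℝ,
          signChangesList (List.ofFn a) =
            if a 0 = 0 then signChangesList (List.ofFn (fun i : Fin n => a i.succ))
            else (if 0 < a 0 then signChangesList (1 :: List.ofFn (fun i : Fin n => a i.succ))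
               else signChangesList (-1 :: List.ofFn (fun i : Fin n => a i.succ))) := by
        intro a
        rw [List.ofFn_succ]
        by_cases h0 : a 0 = 0
        · rw [if_pos h0, h0, signChangesList_zero_cons]
        · rw [if_neg h0]
          by_cases hpos : 0 < a 0
          · rw [if_pos hpos]
            exact signChangesList_anchor_congr _ _ h0 one_ne_zero (by simp [hpos]) _
          · rw [if_neg hpos]
            exact signChangesList_anchor_congr _ _ h0 (by norm_num)
              (by constructor <;> intro h <;> [exact absurd h hpos; linarith]) _
      simp only [key]
      have htail : Measurable (fun a : Fin (n+1) → ℝ => fun i : Fin n => a i.succ) :=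
        measurable_pi_lambda _ (fun i => measurable_pi_apply _)
      have h0m : MeasurableSet {a : Fin (n+1) → ℝ | a 0 = 0} :=
        (measurable_pi_apply 0) (measurableSet_singleton 0)
      apply Measurable.ite h0m
      · exact (measurable_unanchored n).comp htail
      · apply Measurable.ite
        · exact measurableSet_lt measurable_const (measurable_pi_apply 0)
        · exact (measurable_anchored n 1 one_ne_zero).comp htail
        · exact (measurable_anchored n (-1) (by norm_num)).comp htail


section Indep

variable {Ω : Type} [MeasurableSpace Ω] {μ : Measure Ω}

lemma iIndepFun_tail {R : ℕ} {Z : Fin (R+1) → Ω → ℝ}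
    (h : iIndepFun Z μ) :
    iIndepFun (fun i : Fin R => Z i.succ) μ := by
  rw [iIndepFun_iff_measure_inter_preimage_eq_mul] at h ⊢
  intro S sets hsets
  classical
  have hemb : Function.Injective (Fin.succ : Fin R → Fin (R+1)) := Fin.succ_injective R
  set sets' : Fin (R+1) → Set ℝ := fun j => Fin.cases Set.univ sets j with hsets'
  have h2 := h (S.map ⟨Fin.succ, hemb⟩) (sets := sets') ?_
  · have e1 : (⋂ i ∈ S.map ⟨Fin.succ, hemb⟩, Z i ⁻¹' sets' i)
        = ⋂ i ∈ S, Z i.succ ⁻¹' sets i := by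
      ext ω
      simp only [Set.mem_iInter, Finset.mem_map, Function.Embedding.coeFn_mk]
      constructor
      · intro hh i hi
        have := hh i.succ ⟨i, hi, rfl⟩
        simpa [hsets'] using this
      · rintro hh j ⟨i, hi, rfl⟩
        simpa [hsets'] using hh i hi
    have e2 : (∏ i ∈ S.map ⟨Fin.succ, hemb⟩, μ (Z i ⁻¹' sets' i))
        = ∏ i ∈ S, μ (Z i.succ ⁻¹' sets i) := by
      rw [Finset.prod_map]
      apply Finset.prod_congr rfl
      intro i _
      simp [hsets']
    rw [e1, e2] at h2
    exact h2
  · intro j hj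
    rcases Finset.mem_map.mp hj with ⟨i, hi, rfl⟩
    simpa [hsets'] using hsets i hi

lemma indepFun_head_tail {R : ℕ} {Z : Fin (R+1) → Ω → ℝ}
    (hZ : ∀ r, Measurable (Z r))
    (h : iIndepFun Z μ) :
    IndepFun (Z 0) (fun ω (i : Fin R) => Z i.succ ω) μ := by
  classical
  have hd : Disjoint ({0} : Finset (Fin (R+1))) (Finset.univ.filter (fun j => j ≠ 0)) := by
    simp [Finset.disjoint_left]
  have h1 := h.indepFun_finset {0} (Finset.univ.filter (fun j => j ≠ 0)) hd hZ
  have m0 : (0 : Fin (R+1)) ∈ ({0} : Finset (Fin (R+1))) := by simp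
  let φ : (({0} : Finset (Fin (R+1))) → ℝ) → ℝ := fun v => v ⟨0, m0⟩
  let ψ : ((Finset.univ.filter (fun j : Fin (R+1) => j ≠ 0)) → ℝ) → (Fin R → ℝ) :=
    fun v i => v ⟨i.succ, by simp [Fin.succ_ne_zero]⟩
  have hφ : Measurable φ := measurable_pi_apply _
  have hψ : Measurable ψ := measurable_pi_lambda _ (fun i => measurable_pi_apply _)
  exact h1.comp hφ hψ


end Indep

/-- pointwise three-way decomposition -/
lemma pointwise_decomp (c x : ℝ) (hc : c ≠ 0) (l : List ℝ) :
    ENNReal.ofReal (Real.exp (-(signChangesList (c :: x :: l) : ℝ)))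
    = (if x = 0 then (1:ℝ≥0∞) else 0) *
        ENNReal.ofReal (Real.exp (-(signChangesList (c :: l) : ℝ)))
      + (if 0 < x then (1:ℝ≥0∞) else 0) *
        ((if c < 0 then ENNReal.ofReal (Real.exp (-1)) else 1) *
          ENNReal.ofReal (Real.exp (-(signChangesList ((1:ℝ) :: l) : ℝ))))
      + (if x < 0 then (1:ℝ≥0∞) else 0) *
        ((if 0 < c then ENNReal.ofReal (Real.exp (-1)) else 1) *
          ENNReal.ofReal (Real.exp (-(signChangesList ((-1:ℝ) :: l) : ℝ)))) := by
  rw [signChangesList_cons_cons c x hc]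
  rcases lt_trichotomy x 0 with hx | hx | hx
  · have hx0 : x ≠ 0 := hx.ne
    have hanch : signChangesList (x :: l) = signChangesList ((-1:ℝ) :: l) :=
      signChangesList_anchor_congr x (-1) hx0 (by norm_num)
        (by constructor <;> intro h <;> linarith) l
    rw [if_neg hx0, hanch]
    simp only [if_neg hx0, if_neg (lt_asymm hx), if_pos hx, zero_mul, one_mul, zero_add, add_zero]
    rcases lt_trichotomy c 0 with hcneg | h0 | hcpos
    · have : ¬ (c * x < 0) := by nlinarith
      rw [if_neg this, if_neg (lt_asymm hcneg)]
      simp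
    · exact absurd h0 hc
    · have : c * x < 0 := by nlinarith
      rw [if_pos this, if_pos hcpos]
      have : ((1 + signChangesList ((-1:ℝ) :: l) : ℕ) : ℝ)
          = 1 + (signChangesList ((-1:ℝ) :: l) : ℝ) := by push_cast; ring
      rw [this, show -(1 + (signChangesList ((-1:ℝ) :: l) : ℝ)) =
          (-1) + (-(signChangesList ((-1:ℝ) :: l) : ℝ)) by ring, Real.exp_add,
        ENNReal.ofReal_mul (Real.exp_pos _).le]
  · subst hx
    simp
  · have hx0 : x ≠ 0 := hx.ne'
    have hanch : signChangesList (x :: l) = signChangesList ((1:ℝ) :: l) :=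
      signChangesList_anchor_congr x 1 hx0 one_ne_zero (by simp [hx]) l
    rw [if_neg hx0, hanch]
    simp only [if_neg hx0, if_pos hx, if_neg (lt_asymm hx), zero_mul, one_mul, zero_add, add_zero]
    rcases lt_trichotomy c 0 with hcneg | h0 | hcpos
    · have : c * x < 0 := by nlinarith
      rw [if_pos this, if_pos hcneg]
      have h2 : ((1 + signChangesList ((1:ℝ) :: l) : ℕ) : ℝ)
          = 1 + (signChangesList ((1:ℝ) :: l) : ℝ) := by push_cast; ring
      rw [h2, show -(1 + (signChangesList ((1:ℝ) :: l) : ℝ)) =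
          (-1) + (-(signChangesList ((1:ℝ) :: l) : ℝ)) by ring, Real.exp_add,
        ENNReal.ofReal_mul (Real.exp_pos _).le]
    · exact absurd h0 hc
    · have : ¬ (c * x < 0) := by nlinarith
      rw [if_neg this, if_neg (lt_asymm hcpos)]
      simp

lemma ennreal_bound (δ q : ℝ) (hq0 : 0 ≤ q) (hq1 : q ≤ 1) (hδq : δ ≤ q) :
    (1 - ENNReal.ofReal q) + ENNReal.ofReal q * ENNReal.ofReal (Real.exp (-1))
      ≤ 1 - ENNReal.ofReal δ * (1 - ENNReal.ofReal (Real.exp (-1))) := by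
  have he0 : (0:ℝ) ≤ Real.exp (-1) := (Real.exp_pos _).le
  have he1 : Real.exp (-1) ≤ 1 := by
    have h := Real.exp_lt_exp.mpr (show (-1:ℝ) < 0 by norm_num)
    rw [Real.exp_zero] at h; exact h.le
  have hq' : ENNReal.ofReal q ≤ 1 := ENNReal.ofReal_le_one.mpr hq1
  by_cases hδ0 : 0 ≤ δ
  · have e1 : (1:ℝ≥0∞) - ENNReal.ofReal q = ENNReal.ofReal (1 - q) := by
      rw [ENNReal.ofReal_sub 1 hq0, ENNReal.ofReal_one]
    have e2 : ENNReal.ofReal q * ENNReal.ofReal (Real.exp (-1))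
        = ENNReal.ofReal (q * Real.exp (-1)) := (ENNReal.ofReal_mul hq0).symm
    have e3 : (1:ℝ≥0∞) - ENNReal.ofReal (Real.exp (-1)) = ENNReal.ofReal (1 - Real.exp (-1)) := by
      rw [ENNReal.ofReal_sub 1 he0, ENNReal.ofReal_one]
    have e4 : ENNReal.ofReal δ * ENNReal.ofReal (1 - Real.exp (-1))
        = ENNReal.ofReal (δ * (1 - Real.exp (-1))) := (ENNReal.ofReal_mul hδ0).symm
    have e5 : (1:ℝ≥0∞) - ENNReal.ofReal (δ * (1 - Real.exp (-1)))
        = ENNReal.ofReal (1 - δ * (1 - Real.exp (-1))) := by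
      rw [ENNReal.ofReal_sub 1 (by nlinarith), ENNReal.ofReal_one]
    rw [e1, e2, e3, e4, e5, ← ENNReal.ofReal_add (by linarith) (by positivity)]
    apply ENNReal.ofReal_le_ofReal
    nlinarith
  · push_neg at hδ0
    rw [ENNReal.ofReal_of_nonpos hδ0.le, zero_mul, tsub_zero]
    calc (1 - ENNReal.ofReal q) + ENNReal.ofReal q * ENNReal.ofReal (Real.exp (-1))
        ≤ (1 - ENNReal.ofReal q) + ENNReal.ofReal q * 1 :=
          add_le_add_right (mul_le_mul_right (ENNReal.ofReal_le_one.mpr he1) _) _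
      _ = (1 - ENNReal.ofReal q) + ENNReal.ofReal q := by rw [mul_one]
      _ = 1 := tsub_add_cancel_of_le hq'

lemma lemA (δ : ℝ) :
    ∀ (R : ℕ) (Ω : Type) (mΩ : MeasurableSpace Ω) (μ : Measure Ω),
      IsProbabilityMeasure μ →
      ∀ (Z : Fin R → Ω → ℝ), (∀ r, Measurable (Z r)) →
        iIndepFun Z μ →
        (∀ r, ENNReal.ofReal δ ≤ μ {ω | 0 < Z r ω}) →
        (∀ r, ENNReal.ofReal δ ≤ μ {ω | Z r ω < 0}) →
        ∀ c : ℝ, c ≠ 0 →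
        ∫⁻ ω, ENNReal.ofReal
            (Real.exp (-(signChangesList (c :: List.ofFn (fun i => Z i ω)) : ℝ))) ∂μ
          ≤ (1 - ENNReal.ofReal δ * (1 - ENNReal.ofReal (Real.exp (-1)))) ^ R := by
  intro R
  induction R with
  | zero =>
      intro Ω mΩ μ hprob Z hZ hind hpos hneg c hc
      have hconst : ∀ ω : Ω, ENNReal.ofReal
          (Real.exp (-(signChangesList (c :: List.ofFn (fun i => Z i ω)) : ℝ))) = 1 := by
        intro ω
        have h0 : List.ofFn (fun i : Fin 0 => Z i ω) = [] := by simp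
        rw [h0, signChangesList_singleton]
        simp
      rw [lintegral_congr hconst]
      simp
  | succ R IH =>
      intro Ω mΩ μ hprob Z hZ hind hpos hneg c hc
      set E1 : ℝ≥0∞ := ENNReal.ofReal (Real.exp (-1)) with hE1
      set B : ℝ≥0∞ := 1 - ENNReal.ofReal δ * (1 - E1) with hBdef
      set T : Ω → (Fin R → ℝ) := fun ω i => Z i.succ ω with hTdef
      have hTmeas : Measurable T := measurable_pi_lambda _ (fun i => hZ _)
      have htailindep := iIndepFun_tail hind
      have hIH : ∀ d : ℝ, d ≠ 0 →
          ∫⁻ ω, ENNReal.ofReal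
            (Real.exp (-(signChangesList (d :: List.ofFn (fun i => Z i.succ ω)) : ℝ))) ∂μ
            ≤ B ^ R :=
        fun d hd => IH Ω mΩ μ hprob _ (fun r => hZ _) htailindep (fun r => hpos _)
          (fun r => hneg _) d hd
      set g : ℝ → (Fin R → ℝ) → ℝ≥0∞ :=
        fun d v => ENNReal.ofReal (Real.exp (-(signChangesList (d :: List.ofFn v) : ℝ)))
        with hgdef
      have hgmeas : ∀ d : ℝ, d ≠ 0 → Measurable (g d) := by
        intro d hd
        exact Measurable.comp (f := fun v : Fin R → ℝ => signChangesList (d :: List.ofFn v))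
          (g := fun n : ℕ => ENNReal.ofReal (Real.exp (-(n : ℝ))))
          measurable_from_top (measurable_anchored R d hd)
      set i0 : ℝ → ℝ≥0∞ := fun x => if x = 0 then 1 else 0 with hi0def
      set ip : ℝ → ℝ≥0∞ := fun x => if 0 < x then 1 else 0 with hipdef
      set iN : ℝ → ℝ≥0∞ := fun x => if x < 0 then 1 else 0 with hiNdef
      have hi0m : Measurable i0 :=
        Measurable.ite (measurableSet_eq) measurable_const measurable_const
      have hipm : Measurable ip :=
        Measurable.ite (measurableSet_lt measurable_const measurable_id)
          measurable_const measurable_const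
      have hiNm : Measurable iN :=
        Measurable.ite (measurableSet_lt measurable_id measurable_const)
          measurable_const measurable_const
      set wp : ℝ≥0∞ := if c < 0 then E1 else 1 with hwpdef
      set wn : ℝ≥0∞ := if 0 < c then E1 else 1 with hwndef
      have key : ∀ ω, ENNReal.ofReal
          (Real.exp (-(signChangesList (c :: List.ofFn (fun i : Fin (R+1) => Z i ω)) : ℝ)))
          = i0 (Z 0 ω) * g c (T ω) + ip (Z 0 ω) * (wp * g 1 (T ω))
            + iN (Z 0 ω) * (wn * g (-1) (T ω)) := by
        intro ω
        have hofn : List.ofFn (fun i : Fin (R+1) => Z i ω)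
            = Z 0 ω :: List.ofFn (fun i : Fin R => Z i.succ ω) := by
          rw [List.ofFn_succ]
        rw [hofn]
        exact pointwise_decomp c (Z 0 ω) hc _
      rw [lintegral_congr key]
      -- measurability of the three summands
      have mA : Measurable (fun ω => i0 (Z 0 ω) * g c (T ω)) :=
        (hi0m.comp (hZ 0)).mul ((hgmeas c hc).comp hTmeas)
      have mB : Measurable (fun ω => ip (Z 0 ω) * (wp * g 1 (T ω))) :=
        (hipm.comp (hZ 0)).mul (measurable_const.mul ((hgmeas 1 one_ne_zero).comp hTmeas))
      have mC : Measurable (fun ω => iN (Z 0 ω) * (wn * g (-1) (T ω))) :=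
        (hiNm.comp (hZ 0)).mul (measurable_const.mul
          ((hgmeas (-1) (by norm_num)).comp hTmeas))
      rw [lintegral_add_left (show Measurable fun ω => i0 (Z 0 ω) * g c (T ω) + ip (Z 0 ω) * (wp * g 1 (T ω)) from mA.add mB), lintegral_add_left mA]
      -- split the products using independence
      have hbase := indepFun_head_tail hZ hind
      have hsA : ∫⁻ ω, i0 (Z 0 ω) * g c (T ω) ∂μ
          = (∫⁻ ω, i0 (Z 0 ω) ∂μ) * ∫⁻ ω, g c (T ω) ∂μ :=
        lintegral_mul_eq_lintegral_mul_lintegral_of_indepFun''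
          ((hi0m.comp (hZ 0)).aemeasurable) (((hgmeas c hc).comp hTmeas).aemeasurable)
          (hbase.comp hi0m (hgmeas c hc))
      have hsB : ∫⁻ ω, ip (Z 0 ω) * (wp * g 1 (T ω)) ∂μ
          = (∫⁻ ω, ip (Z 0 ω) ∂μ) * ∫⁻ ω, wp * g 1 (T ω) ∂μ :=
        lintegral_mul_eq_lintegral_mul_lintegral_of_indepFun''
          ((hipm.comp (hZ 0)).aemeasurable)
          ((measurable_const.mul ((hgmeas 1 one_ne_zero).comp hTmeas)).aemeasurable)
          (hbase.comp hipm (measurable_const.mul (hgmeas 1 one_ne_zero)))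
      have hsC : ∫⁻ ω, iN (Z 0 ω) * (wn * g (-1) (T ω)) ∂μ
          = (∫⁻ ω, iN (Z 0 ω) ∂μ) * ∫⁻ ω, wn * g (-1) (T ω) ∂μ :=
        lintegral_mul_eq_lintegral_mul_lintegral_of_indepFun''
          ((hiNm.comp (hZ 0)).aemeasurable)
          ((measurable_const.mul ((hgmeas (-1) (by norm_num)).comp hTmeas)).aemeasurable)
          (hbase.comp hiNm (measurable_const.mul (hgmeas (-1) (by norm_num))))
      rw [hsA, hsB, hsC]
      -- compute indicator integrals
      have hm0 : ∫⁻ ω, i0 (Z 0 ω) ∂μ = μ {ω | Z 0 ω = 0} := by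
        have hset : MeasurableSet {ω | Z 0 ω = 0} := (hZ 0) measurableSet_eq
        have heq : (fun ω => i0 (Z 0 ω))
            = Set.indicator {ω | Z 0 ω = 0} (1 : Ω → ℝ≥0∞) := by
          funext ω; by_cases h : Z 0 ω = 0 <;> simp [hi0def, h, Set.indicator_apply]
        rw [heq, lintegral_indicator_one hset]
      have hmp : ∫⁻ ω, ip (Z 0 ω) ∂μ = μ {ω | 0 < Z 0 ω} := by
        have hset : MeasurableSet {ω | 0 < Z 0 ω} :=
          measurableSet_lt measurable_const (hZ 0)
        have heq : (fun ω => ip (Z 0 ω))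
            = Set.indicator {ω | 0 < Z 0 ω} (1 : Ω → ℝ≥0∞) := by
          funext ω; by_cases h : 0 < Z 0 ω <;> simp [hipdef, h, Set.indicator_apply]
        rw [heq, lintegral_indicator_one hset]
      have hmn : ∫⁻ ω, iN (Z 0 ω) ∂μ = μ {ω | Z 0 ω < 0} := by
        have hset : MeasurableSet {ω | Z 0 ω < 0} :=
          measurableSet_lt (hZ 0) measurable_const
        have heq : (fun ω => iN (Z 0 ω))
            = Set.indicator {ω | Z 0 ω < 0} (1 : Ω → ℝ≥0∞) := by
          funext ω; by_cases h : Z 0 ω < 0 <;> simp [hiNdef, h, Set.indicator_apply]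
        rw [heq, lintegral_indicator_one hset]
      rw [hm0, hmp, hmn,
        lintegral_const_mul wp
          (show Measurable fun ω => g 1 (T ω) from (hgmeas 1 one_ne_zero).comp hTmeas),
        lintegral_const_mul wn
          (show Measurable fun ω => g (-1) (T ω) from (hgmeas (-1) (by norm_num)).comp hTmeas)]
      -- bound the tail integrals by IH
      have hIc : ∫⁻ ω, g c (T ω) ∂μ ≤ B ^ R := hIH c hc
      have hI1 : ∫⁻ ω, g 1 (T ω) ∂μ ≤ B ^ R := hIH 1 one_ne_zero
      have hIn : ∫⁻ ω, g (-1) (T ω) ∂μ ≤ B ^ R := hIH (-1) (by norm_num)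
      calc μ {ω | Z 0 ω = 0} * ∫⁻ ω, g c (T ω) ∂μ
            + μ {ω | 0 < Z 0 ω} * (wp * ∫⁻ ω, g 1 (T ω) ∂μ)
            + μ {ω | Z 0 ω < 0} * (wn * ∫⁻ ω, g (-1) (T ω) ∂μ)
          ≤ μ {ω | Z 0 ω = 0} * B ^ R + μ {ω | 0 < Z 0 ω} * (wp * B ^ R)
            + μ {ω | Z 0 ω < 0} * (wn * B ^ R) := by
            gcongr
        _ = (μ {ω | Z 0 ω = 0} + μ {ω | 0 < Z 0 ω} * wp + μ {ω | Z 0 ω < 0} * wn) * B ^ R := by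
            ring
        _ ≤ B * B ^ R := by
            gcongr ?_ * B ^ R
            -- the key scalar inequality
            rcases lt_trichotomy c 0 with hcneg | hc0 | hcpos
            · -- wp = E1, wn = 1  : use positivity mass
              rw [hwpdef, hwndef, if_pos hcneg, if_neg (lt_asymm hcneg)]
              have hsetp : MeasurableSet {ω | 0 < Z 0 ω} :=
                measurableSet_lt measurable_const (hZ 0)
              have hunion : {ω | Z 0 ω = 0} ∪ {ω | Z 0 ω < 0} = {ω | 0 < Z 0 ω}ᶜ := by
                ext ω
                simp only [Set.mem_union, Set.mem_setOf_eq, Set.mem_compl_iff, not_lt]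
                constructor
                · rintro (h | h) <;> simp [h, le_of_lt, h.le]
                · intro h; rcases lt_or_eq_of_le h with h' | h'
                  · exact Or.inr h'
                  · exact Or.inl h'
              have hdisj : Disjoint {ω | Z 0 ω = 0} {ω | Z 0 ω < 0} := by
                rw [Set.disjoint_left]
                intro ω h1 h2
                simp only [Set.mem_setOf_eq] at h1 h2
                rw [h1] at h2; exact lt_irrefl 0 h2
              have hmeasn : MeasurableSet {ω | Z 0 ω < 0} :=
                measurableSet_lt (hZ 0) measurable_const
              have hcompl : μ {ω | Z 0 ω = 0} + μ {ω | Z 0 ω < 0} = 1 - μ {ω | 0 < Z 0 ω} := by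
                rw [← measure_union hdisj hmeasn, hunion,
                  prob_compl_eq_one_sub hsetp]
              set q : ℝ := (μ {ω | 0 < Z 0 ω}).toReal with hqdef
              have hqe : ENNReal.ofReal q = μ {ω | 0 < Z 0 ω} :=
                ENNReal.ofReal_toReal (measure_ne_top μ _)
              have hq1 : q ≤ 1 := by
                have h := prob_le_one (μ := μ) (s := {ω | 0 < Z 0 ω})
                have := ENNReal.toReal_mono ENNReal.one_ne_top h
                simpa using this
              have hδq : δ ≤ q := by
                have h := hpos 0
                rw [← hqe] at h
                exact (ENNReal.ofReal_le_ofReal_iff ENNReal.toReal_nonneg).mp h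
              calc μ {ω | Z 0 ω = 0} + μ {ω | 0 < Z 0 ω} * E1 + μ {ω | Z 0 ω < 0} * 1
                  = (μ {ω | Z 0 ω = 0} + μ {ω | Z 0 ω < 0}) + μ {ω | 0 < Z 0 ω} * E1 := by
                    ring
                _ = (1 - ENNReal.ofReal q) + ENNReal.ofReal q * E1 := by
                    rw [hcompl, hqe]
                _ ≤ B := by
                    rw [hBdef, hE1]
                    exact ennreal_bound δ q ENNReal.toReal_nonneg hq1 hδq
            · exact absurd hc0 hc
            · -- wp = 1, wn = E1 : use negativity mass
              rw [hwpdef, hwndef, if_neg (lt_asymm hcpos), if_pos hcpos]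
              have hsetn : MeasurableSet {ω | Z 0 ω < 0} :=
                measurableSet_lt (hZ 0) measurable_const
              have hunion : {ω | Z 0 ω = 0} ∪ {ω | 0 < Z 0 ω} = {ω | Z 0 ω < 0}ᶜ := by
                ext ω
                simp only [Set.mem_union, Set.mem_setOf_eq, Set.mem_compl_iff, not_lt]
                constructor
                · rintro (h | h) <;> simp [h, le_of_lt, h.le]
                · intro h; rcases lt_or_eq_of_le h with h' | h'
                  · exact Or.inr h'
                  · exact Or.inl h'.symm
              have hdisj : Disjoint {ω | Z 0 ω = 0} {ω | 0 < Z 0 ω} := by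
                rw [Set.disjoint_left]
                intro ω h1 h2
                simp only [Set.mem_setOf_eq] at h1 h2
                rw [h1] at h2; exact lt_irrefl 0 h2
              have hmeasp : MeasurableSet {ω | 0 < Z 0 ω} :=
                measurableSet_lt measurable_const (hZ 0)
              have hcompl : μ {ω | Z 0 ω = 0} + μ {ω | 0 < Z 0 ω} = 1 - μ {ω | Z 0 ω < 0} := by
                rw [← measure_union hdisj hmeasp, hunion,
                  prob_compl_eq_one_sub hsetn]
              set q : ℝ := (μ {ω | Z 0 ω < 0}).toReal with hqdef
              have hqe : ENNReal.ofReal q = μ {ω | Z 0 ω < 0} :=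
                ENNReal.ofReal_toReal (measure_ne_top μ _)
              have hq1 : q ≤ 1 := by
                have h := prob_le_one (μ := μ) (s := {ω | Z 0 ω < 0})
                have := ENNReal.toReal_mono ENNReal.one_ne_top h
                simpa using this
              have hδq : δ ≤ q := by
                have h := hneg 0
                rw [← hqe] at h
                exact (ENNReal.ofReal_le_ofReal_iff ENNReal.toReal_nonneg).mp h
              calc μ {ω | Z 0 ω = 0} + μ {ω | 0 < Z 0 ω} * 1 + μ {ω | Z 0 ω < 0} * E1
                  = (μ {ω | Z 0 ω = 0} + μ {ω | 0 < Z 0 ω}) + μ {ω | Z 0 ω < 0} * E1 := by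
                    ring
                _ = (1 - ENNReal.ofReal q) + ENNReal.ofReal q * E1 := by
                    rw [hcompl, hqe]
                _ ≤ B := by
                    rw [hBdef, hE1]
                    exact ennreal_bound δ q ENNReal.toReal_nonneg hq1 hδq
        _ = B ^ (R + 1) := by
            rw [pow_succ]; ring


/-- There is an absolute constant `C > 0` such that for independent real random
variables `Z_1, …, Z_R` with `P(Z_r > 0) ≥ δ` and `P(Z_r < 0) ≥ δ`, one has
`P(S⁻(Z_1, …, Z_R) ≤ δR/5) ≤ C e^{-δR/3}`, uniformly in `δ` and `R`. -/
theorem sign_changes_of_independent_rvs :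
    ∃ C : ℝ, 0 < C ∧
      ∀ (δ : ℝ), 0 < δ →
      ∀ (R : ℕ) (Ω : Type) (mΩ : MeasurableSpace Ω) (μ : Measure Ω),
        IsProbabilityMeasure μ →
      ∀ Z : Fin R → Ω → ℝ, (∀ r, Measurable (Z r)) →
        iIndepFun Z μ →
        (∀ r, ENNReal.ofReal δ ≤ μ {ω | 0 < Z r ω}) →
        (∀ r, ENNReal.ofReal δ ≤ μ {ω | Z r ω < 0}) →
        μ {ω | (signChangesFin (fun r => Z r ω) : ℝ) ≤ δ * R / 5}
          ≤ ENNReal.ofReal (C * Real.exp (-δ * R / 3)) := by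
  refine ⟨Real.exp 1, Real.exp_pos 1, ?_⟩
  intro δ hδ R Ω mΩ μ hprob Z hZ hind hpos hneg
  have hδ0 : (0:ℝ) ≤ δ := hδ.le
  have hR0 : (0:ℝ) ≤ (R:ℝ) := Nat.cast_nonneg R
  -- basic exponential facts
  have he0 : (0:ℝ) ≤ Real.exp (-1) := (Real.exp_pos _).le
  have he715 : Real.exp (-1) ≤ 7 / 15 := by
    have h9 : (2.7182818283:ℝ) < Real.exp 1 := Real.exp_one_gt_d9
    have hinv : (Real.exp 1)⁻¹ * Real.exp 1 = 1 := inv_mul_cancel₀ (ne_of_gt (Real.exp_pos 1))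
    have hnn : (0:ℝ) ≤ (Real.exp 1)⁻¹ := inv_nonneg.mpr (Real.exp_pos 1).le
    rw [Real.exp_neg]
    nlinarith [h9, hinv, hnn]
  -- the function S and the exponential transform
  set S : Ω → ℕ := fun ω => signChangesList (List.ofFn (fun r => Z r ω)) with hSdef
  set f : Ω → ℝ≥0∞ := fun ω => ENNReal.ofReal (Real.exp (-(S ω : ℝ))) with hfdef
  have hTall : Measurable (fun ω (r : Fin R) => Z r ω) := measurable_pi_lambda _ hZ
  have hSmeas : Measurable S := (measurable_unanchored R).comp hTall
  have hfmeas : Measurable f :=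
    Measurable.comp (g := fun n : ℕ => ENNReal.ofReal (Real.exp (-(n:ℝ))))
      measurable_from_top hSmeas
  set a : ℝ≥0∞ := ENNReal.ofReal (Real.exp (-(δ * R / 5))) with hadef
  have ha0 : a ≠ 0 := by
    rw [hadef]
    exact (ENNReal.ofReal_pos.mpr (Real.exp_pos _)).ne'
  have haT : a ≠ ⊤ := ENNReal.ofReal_ne_top
  -- the event is contained in a superlevel set of f
  have hsub : {ω | (signChangesFin (fun r => Z r ω) : ℝ) ≤ δ * R / 5} ⊆ {ω | a ≤ f ω} := by
    intro ω hω
    simp only [Set.mem_setOf_eq] at hω ⊢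
    rw [hfdef, hadef]
    apply ENNReal.ofReal_le_ofReal
    apply Real.exp_le_exp.mpr
    have : (S ω : ℝ) = (signChangesFin (fun r => Z r ω) : ℝ) := rfl
    rw [this]
    linarith
  -- Markov
  have hmarkov : a * μ {ω | a ≤ f ω} ≤ ∫⁻ ω, f ω ∂μ :=
    mul_meas_ge_le_lintegral₀ hfmeas.aemeasurable a
  have hEmark : a * μ {ω | (signChangesFin (fun r => Z r ω) : ℝ) ≤ δ * R / 5}
      ≤ ∫⁻ ω, f ω ∂μ :=
    le_trans (mul_le_mul_right (measure_mono hsub) a) hmarkov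
  -- bound the mgf via the anchored version and lemA
  have hpoint : ∀ ω, f ω ≤ ENNReal.ofReal (Real.exp 1) *
      ENNReal.ofReal (Real.exp (-(signChangesList ((1:ℝ) :: List.ofFn (fun i => Z i ω)) : ℝ))) := by
    intro ω
    rw [hfdef, ← ENNReal.ofReal_mul (Real.exp_pos 1).le, ← Real.exp_add]
    apply ENNReal.ofReal_le_ofReal
    apply Real.exp_le_exp.mpr
    have h := signChangesList_cons_le (1:ℝ) (List.ofFn (fun i => Z i ω))
    have h' : (signChangesList ((1:ℝ) :: List.ofFn (fun i => Z i ω)) : ℝ)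
        ≤ 1 + (signChangesList (List.ofFn (fun i => Z i ω)) : ℝ) := by
      exact_mod_cast h
    have hS : (S ω : ℝ) = (signChangesList (List.ofFn (fun i => Z i ω)) : ℝ) := rfl
    rw [hS]
    linarith
  have hanch : Measurable (fun ω => ENNReal.ofReal
      (Real.exp (-(signChangesList ((1:ℝ) :: List.ofFn (fun i => Z i ω)) : ℝ)))) :=
    Measurable.comp (g := fun n : ℕ => ENNReal.ofReal (Real.exp (-(n:ℝ))))
      measurable_from_top ((measurable_anchored R 1 one_ne_zero).comp hTall)
  have hmgf : ∫⁻ ω, f ω ∂μ ≤ ENNReal.ofReal (Real.exp 1) *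
      ((1 - ENNReal.ofReal δ * (1 - ENNReal.ofReal (Real.exp (-1)))) ^ R) := by
    calc ∫⁻ ω, f ω ∂μ
        ≤ ∫⁻ ω, ENNReal.ofReal (Real.exp 1) * ENNReal.ofReal
            (Real.exp (-(signChangesList ((1:ℝ) :: List.ofFn (fun i => Z i ω)) : ℝ))) ∂μ :=
          lintegral_mono hpoint
      _ = ENNReal.ofReal (Real.exp 1) * ∫⁻ ω, ENNReal.ofReal
            (Real.exp (-(signChangesList ((1:ℝ) :: List.ofFn (fun i => Z i ω)) : ℝ))) ∂μ :=
          lintegral_const_mul _ hanch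
      _ ≤ ENNReal.ofReal (Real.exp 1) *
            ((1 - ENNReal.ofReal δ * (1 - ENNReal.ofReal (Real.exp (-1)))) ^ R) := by
          gcongr
          exact lemA δ R Ω mΩ μ hprob Z hZ hind hpos hneg 1 one_ne_zero
  -- bound the base B by an exponential
  have hBexp : (1 - ENNReal.ofReal δ * (1 - ENNReal.ofReal (Real.exp (-1)))) ^ R
      ≤ ENNReal.ofReal (Real.exp (-(R * (δ * (1 - Real.exp (-1)))))) := by
    have hb : (1:ℝ≥0∞) - ENNReal.ofReal δ * (1 - ENNReal.ofReal (Real.exp (-1)))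
        ≤ ENNReal.ofReal (Real.exp (-(δ * (1 - Real.exp (-1))))) := by
      have e3 : (1:ℝ≥0∞) - ENNReal.ofReal (Real.exp (-1))
          = ENNReal.ofReal (1 - Real.exp (-1)) := by
        rw [ENNReal.ofReal_sub 1 he0, ENNReal.ofReal_one]
      have e4 : ENNReal.ofReal δ * ENNReal.ofReal (1 - Real.exp (-1))
          = ENNReal.ofReal (δ * (1 - Real.exp (-1))) := (ENNReal.ofReal_mul hδ0).symm
      have e5 : (1:ℝ≥0∞) - ENNReal.ofReal (δ * (1 - Real.exp (-1)))
          = ENNReal.ofReal (1 - δ * (1 - Real.exp (-1))) := by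
        rw [ENNReal.ofReal_sub 1 (by nlinarith), ENNReal.ofReal_one]
      rw [e3, e4, e5]
      apply ENNReal.ofReal_le_ofReal
      have := Real.add_one_le_exp (-(δ * (1 - Real.exp (-1))))
      linarith
    calc (1 - ENNReal.ofReal δ * (1 - ENNReal.ofReal (Real.exp (-1)))) ^ R
        ≤ (ENNReal.ofReal (Real.exp (-(δ * (1 - Real.exp (-1)))))) ^ R := by gcongr
      _ = ENNReal.ofReal ((Real.exp (-(δ * (1 - Real.exp (-1))))) ^ R) := by
          rw [← ENNReal.ofReal_pow (Real.exp_pos _).le]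
      _ = ENNReal.ofReal (Real.exp (-(R * (δ * (1 - Real.exp (-1)))))) := by
          rw [← Real.exp_nat_mul]
          ring_nf
  -- put everything together
  have hchain : a * μ {ω | (signChangesFin (fun r => Z r ω) : ℝ) ≤ δ * R / 5}
      ≤ ENNReal.ofReal (Real.exp (1 - R * (δ * (1 - Real.exp (-1))))) := by
    calc a * μ {ω | (signChangesFin (fun r => Z r ω) : ℝ) ≤ δ * R / 5}
        ≤ ∫⁻ ω, f ω ∂μ := hEmark
      _ ≤ ENNReal.ofReal (Real.exp 1) *
            ((1 - ENNReal.ofReal δ * (1 - ENNReal.ofReal (Real.exp (-1)))) ^ R) := hmgf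
      _ ≤ ENNReal.ofReal (Real.exp 1) *
            ENNReal.ofReal (Real.exp (-(R * (δ * (1 - Real.exp (-1)))))) := by
          gcongr
      _ = ENNReal.ofReal (Real.exp (1 - R * (δ * (1 - Real.exp (-1))))) := by
          rw [← ENNReal.ofReal_mul (Real.exp_pos 1).le, ← Real.exp_add]
          ring_nf
  have hfinal : μ {ω | (signChangesFin (fun r => Z r ω) : ℝ) ≤ δ * R / 5}
      ≤ ENNReal.ofReal (Real.exp (1 - R * (δ * (1 - Real.exp (-1)))))  / a := by
    rw [ENNReal.le_div_iff_mul_le (Or.inl ha0) (Or.inl haT), mul_comm]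
    exact hchain
  refine le_trans hfinal ?_
  rw [hadef, ← ENNReal.ofReal_div_of_pos (Real.exp_pos _), ← Real.exp_sub,
    show Real.exp 1 * Real.exp (-δ * R / 3) = Real.exp (1 + -δ * R / 3) from
      (Real.exp_add _ _).symm]
  apply ENNReal.ofReal_le_ofReal
  apply Real.exp_le_exp.mpr
  have hprod : 0 ≤ δ * R := mul_nonneg hδ0 hR0
  nlinarith [hprod, he715, mul_le_mul_of_nonneg_left he715 hprod]
end

section
/- Let m ≥ 1 be an integer and let κ_1, ..., κ_m be nonnegative real numbers. Define γ(s) = π^{−ms/2} ∏_{j=1}^{m} Γ((s + κ_j)/2) and, for y > 0, define W(y) = (1/(2π)) ∫_{−∞}^{∞} γ(2 + it) · y^{−(2+it)} dt (the inverse Mellin transform of γ along the vertical line Re(s) = 2). Then there exist constants A > 0 and C > 0 (depending only on m and the κ_j) such that |W(y)| ≤ C · e^{−mπ y^{2/m}} · y^{A} for all y > 1. -/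
open Real Complex MeasureTheory Nat
set_option maxHeartbeats 2000000

/-- The archimedean factor `γ(s) = π^{-ms/2} ∏_j Γ((s + κ_j)/2)`. -/
noncomputable def gammaFactor (m : ℕ) (κ : Fin m → ℝ) (s : ℂ) : ℂ :=
  (Real.pi : ℂ) ^ (-(m : ℂ) * s / 2) * ∏ j, Complex.Gamma ((s + (κ j : ℂ)) / 2)

/-- The inverse Mellin transform of `γ` along the vertical line `Re(s) = 2`:
`W(y) = (1/2π) ∫_ℝ γ(2 + it) y^{-(2+it)} dt`. -/
noncomputable def WFun (m : ℕ) (κ : Fin m → ℝ) (y : ℝ) : ℂ :=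
  (1 / (2 * Real.pi)) •
    ∫ t : ℝ, gammaFactor m κ (2 + t * Complex.I) * (y : ℂ) ^ (-(2 + t * Complex.I))


section Aux

lemma norm_Gamma_le {s : ℂ} (hs : 0 < s.re) : ‖Complex.Gamma s‖ ≤ Real.Gamma s.re := by
  rw [Complex.Gamma_eq_integral hs, Real.Gamma_eq_integral hs, Complex.GammaIntegral]
  calc ‖∫ x in Set.Ioi (0:ℝ), (Real.exp (-x) : ℂ) * (x:ℂ) ^ (s - 1)‖
      ≤ ∫ x in Set.Ioi (0:ℝ), ‖(Real.exp (-x) : ℂ) * (x:ℂ) ^ (s - 1)‖ :=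
        MeasureTheory.norm_integral_le_integral_norm _
    _ ≤ ∫ x in Set.Ioi (0:ℝ), Real.exp (-x) * x ^ (s.re - 1) := by
        apply MeasureTheory.setIntegral_mono_on
        · exact ((Complex.GammaIntegral_convergent hs).norm)
        · exact Real.GammaIntegral_convergent hs
        · exact measurableSet_Ioi
        · intro x hx
          rw [norm_mul, Complex.norm_real, Real.norm_eq_abs,
            Complex.norm_cpow_eq_rpow_re_of_pos hx]
          simp [_root_.abs_of_nonneg (Real.exp_pos (-x)).le, Complex.sub_re]

lemma Gamma_le_Gamma_add_two {x : ℝ} (hx : 1 ≤ x) :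
    Real.Gamma x ≤ Real.Gamma (x + 2) := by
  have hx0 : (0:ℝ) < x := by linarith
  have h1 : Real.Gamma (x + 1) = x * Real.Gamma x := Real.Gamma_add_one hx0.ne'
  have h2 : Real.Gamma (x + 2) = (x + 1) * Real.Gamma (x + 1) := by
    have := Real.Gamma_add_one (s := x + 1) (by linarith)
    convert this using 2 <;> ring
  have hG : 0 < Real.Gamma x := Real.Gamma_pos_of_pos hx0
  have key : (1:ℝ) ≤ (x + 1) * x := by nlinarith
  calc Real.Gamma x = 1 * Real.Gamma x := (one_mul _).symm
    _ ≤ ((x + 1) * x) * Real.Gamma x := mul_le_mul_of_nonneg_right key hG.le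
    _ = Real.Gamma (x + 2) := by rw [h2, h1]; ring

/-- decay of Gamma on vertical lines -/
lemma norm_Gamma_decay {s : ℂ} (hs : 1 ≤ s.re) :
    ‖Complex.Gamma s‖ ≤ 2 * Real.Gamma (s.re + 2) / (1 + s.im ^ 2) := by
  have hs0 : 0 < s.re := by linarith
  have hGpos : 0 < Real.Gamma (s.re + 2) := Real.Gamma_pos_of_pos (by linarith)
  have hG2 : ‖Complex.Gamma (s + 2)‖ ≤ Real.Gamma (s.re + 2) := by
    have := norm_Gamma_le (s := s + 2) (by simp [Complex.add_re]; linarith)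
    simpa using this
  have hsne : s ≠ 0 := fun h => by simp [h] at hs0
  have hs1ne : s + 1 ≠ 0 := fun h => by
    have : (s + 1).re = 0 := by rw [h]; simp
    simp [Complex.add_re] at this; linarith
  have hrec : Complex.Gamma (s + 2) = (s + 1) * (s * Complex.Gamma s) := by
    have e1 : Complex.Gamma (s + 1) = s * Complex.Gamma s := Complex.Gamma_add_one s hsne
    have e2 : Complex.Gamma (s + 1 + 1) = (s + 1) * Complex.Gamma (s + 1) :=
      Complex.Gamma_add_one (s + 1) hs1ne
    calc Complex.Gamma (s + 2) = Complex.Gamma (s + 1 + 1) := by ring_nf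
      _ = (s + 1) * Complex.Gamma (s + 1) := e2
      _ = (s + 1) * (s * Complex.Gamma s) := by rw [e1]
  have hnorm : ‖Complex.Gamma (s + 2)‖ = ‖s + 1‖ * ‖s‖ * ‖Complex.Gamma s‖ := by
    rw [hrec, norm_mul, norm_mul]; ring
  have hnn : 0 ≤ ‖Complex.Gamma s‖ := norm_nonneg _
  rcases le_or_gt (s.im ^ 2) 1 with him | him
  · have h := norm_Gamma_le hs0
    have hle : Real.Gamma s.re ≤ Real.Gamma (s.re + 2) := Gamma_le_Gamma_add_two hs
    have h2 : (1 + s.im ^ 2) ≤ 2 := by linarith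
    rw [le_div_iff₀ (by positivity)]
    nlinarith [mul_le_mul_of_nonneg_left h2 hnn]
  · have him1 : |s.im| ≤ ‖s‖ := by
      exact Complex.abs_im_le_norm s
    have him2 : |s.im| ≤ ‖s + 1‖ := by
      have : (s + 1).im = s.im := by simp
      calc |s.im| = |(s + 1).im| := by rw [this]
        _ ≤ ‖s + 1‖ := Complex.abs_im_le_norm _
    have key : s.im ^ 2 * ‖Complex.Gamma s‖ ≤ Real.Gamma (s.re + 2) := by
      calc s.im ^ 2 * ‖Complex.Gamma s‖ = (|s.im| * |s.im|) * ‖Complex.Gamma s‖ := by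
            rw [← abs_mul, ← sq, _root_.abs_of_nonneg (sq_nonneg _)]
        _ ≤ (‖s + 1‖ * ‖s‖) * ‖Complex.Gamma s‖ := by
            apply mul_le_mul_of_nonneg_right _ hnn
            exact mul_le_mul him2 him1 (abs_nonneg _) (norm_nonneg _)
        _ = ‖Complex.Gamma (s + 2)‖ := hnorm.symm
        _ ≤ Real.Gamma (s.re + 2) := hG2
    rw [le_div_iff₀ (by positivity)]
    nlinarith [key, him, hnn]

section
variable {m : ℕ} {κ : Fin m → ℝ}

lemma re_aux (σ t : ℝ) : ((σ : ℂ) + t * I).re = σ := by simp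
lemma im_aux (σ t : ℝ) : ((σ : ℂ) + t * I).im = t := by simp

lemma norm_integrand_le (hm : 1 ≤ m) (hκ : ∀ j, 0 ≤ κ j) {σ y : ℝ} (t : ℝ)
    (hσ : 2 ≤ σ) (hy : 0 < y) :
    ‖gammaFactor m κ ((σ : ℂ) + t * I) * (y : ℂ) ^ (-((σ : ℂ) + t * I))‖ ≤
      Real.pi ^ (-(m : ℝ) * σ / 2) * (∏ j, 2 * Real.Gamma ((σ + κ j) / 2 + 2)) *
        (4 / (1 + t ^ 2)) * y ^ (-σ) := by
  set s : ℂ := (σ : ℂ) + t * I with hs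
  have hπ : ‖(Real.pi : ℂ) ^ (-(m : ℂ) * s / 2)‖ = Real.pi ^ (-(m : ℝ) * σ / 2) := by
    rw [Complex.norm_cpow_eq_rpow_re_of_pos Real.pi_pos]
    congr 1
    have : (-(m : ℂ) * s / 2).re = -(m : ℝ) * s.re / 2 := by
      simp [Complex.div_re, Complex.mul_re]
    rw [this, re_aux]
  have hy' : ‖(y : ℂ) ^ (-s)‖ = y ^ (-σ) := by
    rw [Complex.norm_cpow_eq_rpow_re_of_pos hy]
    congr 1
    rw [Complex.neg_re, re_aux]
  rw [norm_mul, gammaFactor, norm_mul, hπ, hy', norm_prod]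
  have hprod : (∏ j, ‖Complex.Gamma ((s + (κ j : ℂ)) / 2)‖) ≤
      (∏ j, 2 * Real.Gamma ((σ + κ j) / 2 + 2)) * (4 / (1 + t ^ 2)) := by
    have hstep : ∀ j, ‖Complex.Gamma ((s + (κ j : ℂ)) / 2)‖ ≤
        (2 * Real.Gamma ((σ + κ j) / 2 + 2)) * (1 / (1 + (t / 2) ^ 2)) := by
      intro j
      have hre : ((s + (κ j : ℂ)) / 2).re = (σ + κ j) / 2 := by
        simp [hs, Complex.div_re, Complex.add_re, Complex.mul_re]
      have him : ((s + (κ j : ℂ)) / 2).im = t / 2 := by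
        simp [hs, Complex.div_im, Complex.add_im, Complex.mul_im]
      have h1 : (1 : ℝ) ≤ ((s + (κ j : ℂ)) / 2).re := by
        rw [hre]; have := hκ j; linarith
      have := norm_Gamma_decay h1
      rw [hre, him] at this
      calc ‖Complex.Gamma ((s + (κ j : ℂ)) / 2)‖ ≤
            2 * Real.Gamma ((σ + κ j) / 2 + 2) / (1 + (t / 2) ^ 2) := this
        _ = (2 * Real.Gamma ((σ + κ j) / 2 + 2)) * (1 / (1 + (t / 2) ^ 2)) := by ring
    calc (∏ j, ‖Complex.Gamma ((s + (κ j : ℂ)) / 2)‖)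
        ≤ ∏ j, (2 * Real.Gamma ((σ + κ j) / 2 + 2)) * (1 / (1 + (t / 2) ^ 2)) :=
          Finset.prod_le_prod (fun j _ => norm_nonneg _) (fun j _ => hstep j)
      _ = (∏ j, 2 * Real.Gamma ((σ + κ j) / 2 + 2)) * (1 / (1 + (t / 2) ^ 2)) ^ m := by
          rw [Finset.prod_mul_distrib, Finset.prod_const, Finset.card_univ, Fintype.card_fin]
      _ ≤ (∏ j, 2 * Real.Gamma ((σ + κ j) / 2 + 2)) * (4 / (1 + t ^ 2)) := by
          apply mul_le_mul_of_nonneg_left _ (Finset.prod_nonneg fun j _ => by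
            have : 0 < Real.Gamma ((σ + κ j) / 2 + 2) :=
              Real.Gamma_pos_of_pos (by have := hκ j; linarith)
            positivity)
          have h0 : (0 : ℝ) ≤ 1 / (1 + (t / 2) ^ 2) := by positivity
          have h1 : 1 / (1 + (t / 2) ^ 2) ≤ 1 := by
            rw [div_le_one (by positivity)]; nlinarith [sq_nonneg t]
          calc (1 / (1 + (t / 2) ^ 2)) ^ m ≤ (1 / (1 + (t / 2) ^ 2)) ^ 1 :=
                pow_le_pow_of_le_one h0 h1 hm
            _ = 1 / (1 + (t / 2) ^ 2) := pow_one _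
            _ ≤ 4 / (1 + t ^ 2) := by
                rw [div_le_div_iff₀ (by positivity) (by positivity)]; nlinarith [sq_nonneg t]
  have hπnn : (0:ℝ) ≤ Real.pi ^ (-(m : ℝ) * σ / 2) := Real.rpow_nonneg Real.pi_pos.le _
  have hynn : (0:ℝ) ≤ y ^ (-σ) := Real.rpow_nonneg hy.le _
  calc Real.pi ^ (-(m : ℝ) * σ / 2) * (∏ j, ‖Complex.Gamma ((s + (κ j : ℂ)) / 2)‖) * y ^ (-σ)
      ≤ Real.pi ^ (-(m : ℝ) * σ / 2) *
          ((∏ j, 2 * Real.Gamma ((σ + κ j) / 2 + 2)) * (4 / (1 + t ^ 2))) * y ^ (-σ) := by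
        apply mul_le_mul_of_nonneg_right (mul_le_mul_of_nonneg_left hprod hπnn) hynn
    _ = Real.pi ^ (-(m : ℝ) * σ / 2) * (∏ j, 2 * Real.Gamma ((σ + κ j) / 2 + 2)) *
          (4 / (1 + t ^ 2)) * y ^ (-σ) := by ring

lemma not_pole {z : ℂ} (hz : 0 < z.re) : ∀ n : ℕ, z ≠ -n := by
  intro n h
  have h1 : z.re = -(n:ℝ) := by rw [h]; simp
  have h2 : (0:ℝ) ≤ (n:ℝ) := n.cast_nonneg
  linarith [hz.trans_eq h1]

lemma diff_F (hκ : ∀ j, 0 ≤ κ j) {y : ℝ} (hy : 0 < y) {s : ℂ} (hs : 0 < s.re) :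
    DifferentiableAt ℂ (fun s => gammaFactor m κ s * (y : ℂ) ^ (-s)) s := by
  apply DifferentiableAt.mul
  · apply DifferentiableAt.mul
    · apply DifferentiableAt.const_cpow
      · exact (differentiableAt_id.const_mul _).div_const _
      · exact Or.inl (Complex.ofReal_ne_zero.mpr Real.pi_ne_zero)
    · apply DifferentiableAt.fun_finset_prod
      intro j _
      apply DifferentiableAt.comp
      · apply Complex.differentiableAt_Gamma
        apply not_pole
        have hre : ((s + (κ j : ℂ)) / 2).re = (s.re + κ j) / 2 := by
          simp [Complex.div_re, Complex.add_re]
        rw [hre]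
        have := hκ j; linarith
      · exact (differentiableAt_id.add_const _).div_const _
  · apply DifferentiableAt.const_cpow differentiableAt_id.neg
    exact Or.inl (Complex.ofReal_ne_zero.mpr hy.ne')

lemma cont_F (hκ : ∀ j, 0 ≤ κ j) {σ y : ℝ} (hσ : 2 ≤ σ) (hy : 0 < y) :
    Continuous (fun t : ℝ => gammaFactor m κ ((σ:ℂ) + t * I) * (y : ℂ) ^ (-((σ:ℂ) + t * I))) := by
  have hline : Continuous (fun t : ℝ => (σ:ℂ) + t * I) := by continuity
  rw [continuous_iff_continuousAt]
  intro t
  have hre : (((σ:ℂ) + t * I)).re = σ := by simp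
  have h1 : ContinuousAt (fun s : ℂ => gammaFactor m κ s * (y : ℂ) ^ (-s)) ((σ:ℂ) + t * I) :=
    (diff_F hκ hy (s := (σ:ℂ) + t * I) (by rw [hre]; linarith)).continuousAt
  exact ContinuousAt.comp (g := fun s : ℂ => gammaFactor m κ s * (y : ℂ) ^ (-s))
    (f := fun t : ℝ => (σ:ℂ) + t * I) h1 hline.continuousAt

lemma integrable_F (hm : 1 ≤ m) (hκ : ∀ j, 0 ≤ κ j) {σ y : ℝ} (hσ : 2 ≤ σ) (hy : 0 < y) :
    Integrable (fun t : ℝ => gammaFactor m κ ((σ:ℂ) + t * I) * (y : ℂ) ^ (-((σ:ℂ) + t * I))) := by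
  have hbound : ∀ t : ℝ, ‖gammaFactor m κ ((σ:ℂ) + t * I) * (y : ℂ) ^ (-((σ:ℂ) + t * I))‖ ≤
      (Real.pi ^ (-(m : ℝ) * σ / 2) * (∏ j, 2 * Real.Gamma ((σ + κ j) / 2 + 2)) * 4 * y ^ (-σ)) *
        (1 + t ^ 2)⁻¹ := by
    intro t
    refine (norm_integrand_le hm hκ t hσ hy).trans_eq ?_
    ring
  apply Integrable.mono' ((integrable_inv_one_add_sq).const_mul _)
    (cont_F hκ hσ hy).aestronglyMeasurable
  filter_upwards with t
  exact hbound t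
lemma horiz_bound (hm : 1 ≤ m) (hκ : ∀ j, 0 ≤ κ j) {σ y x T : ℝ} (h2x : 2 ≤ x) (hxσ : x ≤ σ)
    (hy : 1 ≤ y) :
    ‖gammaFactor m κ ((x:ℂ) + T * I) * (y : ℂ) ^ (-((x:ℂ) + T * I))‖ ≤
      (∏ j, 2 * Real.Gamma ((σ + κ j) / 2 + 2)) * (4 / (1 + T ^ 2)) := by
  have hy0 : (0:ℝ) < y := by linarith
  refine (norm_integrand_le hm hκ T h2x hy0).trans ?_
  have hπ : Real.pi ^ (-(m : ℝ) * x / 2) ≤ 1 := by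
    apply Real.rpow_le_one_of_one_le_of_nonpos (by linarith [Real.pi_gt_three])
    have h1 : (0:ℝ) ≤ (m:ℝ) * x := by positivity
    linarith
  have hyx : y ^ (-x : ℝ) ≤ 1 := by
    apply Real.rpow_le_one_of_one_le_of_nonpos hy
    linarith
  have hprodnn : (0:ℝ) ≤ ∏ j, 2 * Real.Gamma ((x + κ j) / 2 + 2) :=
    Finset.prod_nonneg fun j _ => by
      have := Real.Gamma_pos_of_pos (show (0:ℝ) < (x + κ j) / 2 + 2 by
        have := hκ j; linarith)
      linarith
  have hprod : (∏ j, 2 * Real.Gamma ((x + κ j) / 2 + 2)) ≤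
      ∏ j, 2 * Real.Gamma ((σ + κ j) / 2 + 2) := by
    apply Finset.prod_le_prod
    · intro j _
      have := Real.Gamma_pos_of_pos (show (0:ℝ) < (x + κ j) / 2 + 2 by
        have := hκ j; linarith)
      linarith
    · intro j _
      have hmono := Real.Gamma_strictMonoOn_Ici.monotoneOn
      have h1 : (x + κ j) / 2 + 2 ∈ Set.Ici (2:ℝ) := by
        simp only [Set.mem_Ici]; have := hκ j; linarith
      have h2 : (σ + κ j) / 2 + 2 ∈ Set.Ici (2:ℝ) := by
        simp only [Set.mem_Ici]; have := hκ j; linarith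
      have := hmono h1 h2 (by have := hκ j; linarith)
      linarith
  have hTnn : (0:ℝ) ≤ 4 / (1 + T ^ 2) := by positivity
  have hprodnn' : (0:ℝ) ≤ ∏ j, 2 * Real.Gamma ((σ + κ j) / 2 + 2) := hprodnn.trans hprod
  have hπnn : (0:ℝ) ≤ Real.pi ^ (-(m : ℝ) * x / 2) := Real.rpow_nonneg Real.pi_pos.le _
  calc Real.pi ^ (-(m : ℝ) * x / 2) * (∏ j, 2 * Real.Gamma ((x + κ j) / 2 + 2)) *
        (4 / (1 + T ^ 2)) * y ^ (-x : ℝ)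
      ≤ Real.pi ^ (-(m : ℝ) * x / 2) * (∏ j, 2 * Real.Gamma ((x + κ j) / 2 + 2)) *
        (4 / (1 + T ^ 2)) * 1 := by
        apply mul_le_mul_of_nonneg_left hyx
        positivity
    _ = Real.pi ^ (-(m : ℝ) * x / 2) * ((∏ j, 2 * Real.Gamma ((x + κ j) / 2 + 2)) *
        (4 / (1 + T ^ 2))) := by ring
    _ ≤ 1 * ((∏ j, 2 * Real.Gamma ((σ + κ j) / 2 + 2)) * (4 / (1 + T ^ 2))) := by
        apply mul_le_mul hπ (mul_le_mul_of_nonneg_right hprod hTnn) (by positivity) zero_le_one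
    _ = (∏ j, 2 * Real.Gamma ((σ + κ j) / 2 + 2)) * (4 / (1 + T ^ 2)) := one_mul _
lemma contour_shift (hm : 1 ≤ m) (hκ : ∀ j, 0 ≤ κ j) {σ y : ℝ} (hσ : 2 ≤ σ) (hy : 1 < y) :
    (∫ t : ℝ, gammaFactor m κ (((2:ℝ):ℂ) + t * I) * (y : ℂ) ^ (-(((2:ℝ):ℂ) + t * I))) =
      ∫ t : ℝ, gammaFactor m κ ((σ:ℂ) + t * I) * (y : ℂ) ^ (-((σ:ℂ) + t * I)) := by
  set F : ℂ → ℂ := fun s => gammaFactor m κ s * (y : ℂ) ^ (-s) with hF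
  have hy0 : (0:ℝ) < y := by linarith
  -- rectangle identity for every T
  have hrect : ∀ T : ℝ,
      (∫ x : ℝ in (2:ℝ)..σ, F ((x:ℂ) + (-T:ℝ) * I)) - (∫ x : ℝ in (2:ℝ)..σ, F ((x:ℂ) + (T:ℝ) * I)) +
        I • (∫ t : ℝ in (-T:ℝ)..T, F ((σ:ℂ) + t * I)) -
        I • (∫ t : ℝ in (-T:ℝ)..T, F (((2:ℝ):ℂ) + t * I)) = 0 := by
    intro T
    have := Complex.integral_boundary_rect_eq_zero_of_differentiableOn F
      (((2:ℝ):ℂ) + (-T:ℝ) * I) ((σ:ℂ) + (T:ℝ) * I) ?_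
    · have e1 : ((((2:ℝ):ℂ) + (-T:ℝ) * I)).re = 2 := by simp
      have e2 : ((((2:ℝ):ℂ) + (-T:ℝ) * I)).im = -T := by simp
      have e3 : (((σ:ℂ) + (T:ℝ) * I)).re = σ := by simp
      have e4 : (((σ:ℂ) + (T:ℝ) * I)).im = T := by simp
      rw [e1, e2, e3, e4] at this
      convert this using 4 <;> norm_num
    · intro s hs
      apply (diff_F hκ hy0 ?_).differentiableWithinAt
      rw [Complex.mem_reProdIm] at hs
      obtain ⟨h1, _⟩ := hs
      have e1 : ((((2:ℝ):ℂ) + ((-T:ℝ):ℂ) * I)).re = 2 := by simp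
      have e3 : (((σ:ℂ) + (T:ℝ) * I)).re = σ := by simp
      rw [e1, e3, Set.uIcc_of_le hσ, Set.mem_Icc] at h1
      linarith [h1.1]
  -- limits of vertical integrals
  have hV2 : Filter.Tendsto (fun T : ℝ => ∫ t : ℝ in (-T:ℝ)..T, F (((2:ℝ):ℂ) + t * I))
      Filter.atTop (nhds (∫ t : ℝ, F (((2:ℝ):ℂ) + t * I))) :=
    intervalIntegral_tendsto_integral (integrable_F hm hκ le_rfl hy0)
      Filter.tendsto_neg_atTop_atBot Filter.tendsto_id
  have hVσ : Filter.Tendsto (fun T : ℝ => ∫ t : ℝ in (-T:ℝ)..T, F ((σ:ℂ) + t * I))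
      Filter.atTop (nhds (∫ t : ℝ, F ((σ:ℂ) + t * I))) :=
    intervalIntegral_tendsto_integral (integrable_F hm hκ hσ hy0)
      Filter.tendsto_neg_atTop_atBot Filter.tendsto_id
  -- horizontal integrals tend to zero
  set K : ℝ := (∏ j, 2 * Real.Gamma ((σ + κ j) / 2 + 2)) with hK
  have hHbound : ∀ T : ℝ, ‖∫ x : ℝ in (2:ℝ)..σ, F ((x:ℂ) + (T:ℝ) * I)‖ ≤
      K * (4 / (1 + T ^ 2)) * |σ - 2| := by
    intro T
    apply intervalIntegral.norm_integral_le_of_norm_le_const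
    intro x hx
    rw [Set.uIoc_of_le hσ] at hx
    exact horiz_bound hm hκ hx.1.le hx.2 hy.le
  have hdenom : Filter.Tendsto (fun T : ℝ => 1 + T ^ 2) Filter.atTop Filter.atTop :=
    Filter.tendsto_atTop_add_const_left _ 1 (Filter.tendsto_pow_atTop two_ne_zero)
  have hzero : Filter.Tendsto (fun T : ℝ => K * (4 / (1 + T ^ 2)) * |σ - 2|)
      Filter.atTop (nhds 0) := by
    have h1 : Filter.Tendsto (fun T : ℝ => 4 / (1 + T ^ 2)) Filter.atTop (nhds 0) :=
      Filter.Tendsto.div_atTop tendsto_const_nhds hdenom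
    have h2 := (h1.const_mul K).mul_const |σ - 2|
    simpa using h2
  have hH : ∀ c : ℝ → ℝ, (∀ T, |c T| = |T|) →
      Filter.Tendsto (fun T : ℝ => ∫ x : ℝ in (2:ℝ)..σ, F ((x:ℂ) + (c T : ℝ) * I))
        Filter.atTop (nhds 0) := by
    intro c hc
    apply squeeze_zero_norm _ hzero
    intro T
    have := hHbound (c T)
    have he : (1 : ℝ) + (c T) ^ 2 = 1 + T ^ 2 := by
      have h2 : (c T) ^ 2 = T ^ 2 := by
        rw [← _root_.sq_abs (c T), ← _root_.sq_abs T, hc T]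
      rw [h2]
    rw [he] at this
    exact this
  have hHtop := hH (fun T => T) (fun T => rfl)
  have hHbot := hH (fun T => -T) (fun T => abs_neg T)
  -- combine
  have hcomb : Filter.Tendsto (fun T : ℝ => I • (∫ t : ℝ in (-T:ℝ)..T, F (((2:ℝ):ℂ) + t * I)))
      Filter.atTop (nhds ((0:ℂ) - 0 + I • (∫ t : ℝ, F ((σ:ℂ) + t * I)))) := by
    have : (fun T : ℝ => I • (∫ t : ℝ in (-T:ℝ)..T, F (((2:ℝ):ℂ) + t * I))) =
        fun T : ℝ => (∫ x : ℝ in (2:ℝ)..σ, F ((x:ℂ) + ((-T:ℝ) : ℝ) * I)) -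
          (∫ x : ℝ in (2:ℝ)..σ, F ((x:ℂ) + (T:ℝ) * I)) +
          I • (∫ t : ℝ in (-T:ℝ)..T, F ((σ:ℂ) + t * I)) := by
      funext T
      have := hrect T
      linear_combination -this
    rw [this]
    exact ((hHbot.sub hHtop).add (hVσ.const_smul I))
  have hcomb2 : Filter.Tendsto (fun T : ℝ => I • (∫ t : ℝ in (-T:ℝ)..T, F (((2:ℝ):ℂ) + t * I)))
      Filter.atTop (nhds (I • (∫ t : ℝ, F (((2:ℝ):ℂ) + t * I)))) := hV2.const_smul I
  have heq := tendsto_nhds_unique hcomb2 hcomb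
  rw [zero_sub, neg_add_eq_sub, sub_zero, smul_eq_mul, smul_eq_mul] at heq
  exact mul_left_cancel₀ Complex.I_ne_zero heq

end

lemma factorial_le_stirling (n : ℕ) (hn : 1 ≤ n) :
    (n ! : ℝ) ≤ Real.exp 1 * Real.sqrt n * ((n : ℝ) / Real.exp 1) ^ n := by
  obtain ⟨k, rfl⟩ := Nat.exists_eq_add_of_le hn
  rw [add_comm 1 k]
  have hpos : 0 < Stirling.stirlingSeq (k + 1) := Stirling.stirlingSeq'_pos k
  have hpos1 : 0 < Stirling.stirlingSeq 1 := Stirling.stirlingSeq'_pos 0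
  have hle : Stirling.stirlingSeq (k + 1) ≤ Stirling.stirlingSeq 1 := by
    have h := Stirling.log_stirlingSeq'_antitone (Nat.zero_le k)
    simp only [Function.comp, Nat.succ_eq_add_one, zero_add] at h
    exact (Real.log_le_log_iff hpos hpos1).mp h
  have hone : Stirling.stirlingSeq 1 = Real.exp 1 / Real.sqrt 2 := by
    simpa using Stirling.stirlingSeq_one
  set n := k + 1
  have hn1 : (1:ℝ) ≤ (n:ℝ) := by exact_mod_cast Nat.one_le_iff_ne_zero.mpr (by omega)
  have hdef : Stirling.stirlingSeq n = (n ! : ℝ) / (Real.sqrt (2 * n) * ((n:ℝ) / Real.exp 1) ^ n) := rfl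
  have hden : 0 < Real.sqrt (2 * n) * ((n:ℝ) / Real.exp 1) ^ n := by
    apply mul_pos (Real.sqrt_pos.mpr (by positivity))
    apply pow_pos (by positivity)
  have := (div_le_iff₀ hden).mp (hdef ▸ hle)
  calc (n ! : ℝ) ≤ Real.exp 1 / Real.sqrt 2 * (Real.sqrt (2 * n) * ((n:ℝ) / Real.exp 1) ^ n) := by
        rw [← hone]; exact this
    _ = Real.exp 1 * Real.sqrt n * ((n:ℝ) / Real.exp 1) ^ n := by
        rw [show (2:ℝ) * n = 2 * n from rfl, Real.sqrt_mul (by norm_num : (0:ℝ) ≤ 2)]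
        rw [div_mul_eq_mul_div, mul_comm]
        field_simp

lemma rpow_div_e_mono {a b : ℝ} (ha : 1 ≤ a) (hab : a ≤ b) :
    (a / Real.exp 1) ^ a ≤ (b / Real.exp 1) ^ b := by
  have ha0 : 0 < a := by linarith
  have hb0 : 0 < b := by linarith
  have key : a * Real.log a - a ≤ b * Real.log b - b := by
    have hD : ∀ t : ℝ, 1 < t → HasDerivAt (fun t : ℝ => t * Real.log t - t) (Real.log t) t := by
      intro t ht1
      have h1 := Real.hasDerivAt_mul_log (by linarith : t ≠ 0)
      have h2 := h1.fun_sub (hasDerivAt_id t)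
      simpa using h2
    have hmono : MonotoneOn (fun t : ℝ => t * Real.log t - t) (Set.Ici 1) := by
      apply monotoneOn_of_deriv_nonneg (convex_Ici 1)
      · exact (Real.continuous_mul_log.sub continuous_id).continuousOn
      · intro t ht
        rw [interior_Ici] at ht
        exact (hD t ht).differentiableAt.differentiableWithinAt
      · intro t ht
        rw [interior_Ici] at ht
        rw [(hD t ht).deriv]
        exact Real.log_nonneg ht.le
    exact hmono (Set.mem_Ici.mpr ha) (Set.mem_Ici.mpr (ha.trans hab)) hab
  have e1 : (a / Real.exp 1) ^ a = Real.exp (a * Real.log a - a) := by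
    rw [Real.rpow_def_of_pos (by positivity)]
    congr 1
    rw [Real.log_div ha0.ne' (Real.exp_ne_zero 1), Real.log_exp]
    ring
  have e2 : (b / Real.exp 1) ^ b = Real.exp (b * Real.log b - b) := by
    rw [Real.rpow_def_of_pos (by positivity)]
    congr 1
    rw [Real.log_div hb0.ne' (Real.exp_ne_zero 1), Real.log_exp]
    ring
  rw [e1, e2]
  exact Real.exp_le_exp.mpr key

lemma Gamma_le_stirling {x : ℝ} (hx : 2 ≤ x) :
    Real.Gamma x ≤ Real.exp 1 * Real.sqrt x * (x / Real.exp 1) ^ x := by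
  obtain ⟨n, hn⟩ : ∃ n : ℕ, n = ⌈x⌉₊ := ⟨⌈x⌉₊, rfl⟩
  have hx0 : (0:ℝ) < x := by linarith
  have hxn : x ≤ n := by rw [hn]; exact Nat.le_ceil x
  have hn2 : 2 ≤ n := by
    have h := Nat.le_ceil x
    by_contra hc
    push_neg at hc
    have : (n:ℝ) < 2 := by exact_mod_cast hc
    linarith
  have hnx : (n : ℝ) ≤ x + 1 := by
    rw [hn]
    have := Nat.ceil_lt_add_one hx0.le
    linarith
  have h1 : Real.Gamma x ≤ Real.Gamma n := by
    rcases eq_or_lt_of_le hxn with h | h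
    · rw [h]
    · exact (Real.Gamma_strictMonoOn_Ici (Set.mem_Ici.mpr hx)
        (Set.mem_Ici.mpr (by exact_mod_cast hn2)) h).le
  obtain ⟨k, rfl⟩ : ∃ k, n = k + 1 := ⟨n - 1, by omega⟩
  have hk1 : 1 ≤ k := by omega
  have h2 : Real.Gamma (↑(k + 1)) = (k ! : ℝ) := by
    exact_mod_cast Real.Gamma_nat_eq_factorial k
  have hkx : (k : ℝ) ≤ x := by
    push_cast at hnx ⊢
    linarith
  have hk1' : (1:ℝ) ≤ (k:ℝ) := by exact_mod_cast hk1
  have h3 : (k ! : ℝ) ≤ Real.exp 1 * Real.sqrt k * ((k:ℝ) / Real.exp 1) ^ k :=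
    factorial_le_stirling k hk1
  have h4 : ((k:ℝ) / Real.exp 1) ^ (k : ℕ) = ((k:ℝ) / Real.exp 1) ^ ((k:ℝ)) := by
    rw [← Real.rpow_natCast]
  have h5 : ((k:ℝ) / Real.exp 1) ^ ((k:ℝ)) ≤ (x / Real.exp 1) ^ x :=
    rpow_div_e_mono hk1' hkx
  have h6 : Real.sqrt k ≤ Real.sqrt x := Real.sqrt_le_sqrt hkx
  calc Real.Gamma x ≤ Real.Gamma (↑(k + 1)) := h1
    _ = (k ! : ℝ) := h2
    _ ≤ Real.exp 1 * Real.sqrt k * ((k:ℝ) / Real.exp 1) ^ (k:ℕ) := h3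
    _ = Real.exp 1 * Real.sqrt k * ((k:ℝ) / Real.exp 1) ^ ((k:ℝ)) := by rw [h4]
    _ ≤ Real.exp 1 * Real.sqrt x * (x / Real.exp 1) ^ x := by
        apply mul_le_mul
        · exact mul_le_mul_of_nonneg_left h6 (Real.exp_pos 1).le
        · exact h5
        · positivity
        · positivity

section
variable {m : ℕ} {κ : Fin m → ℝ}

lemma key_estimate (hm : 1 ≤ m) (hκ : ∀ j, 0 ≤ κ j) {y : ℝ} (hy : 1 < y) :
    Real.pi ^ (-(m:ℝ) * (2 * (Real.pi * y ^ ((2:ℝ)/m))) / 2) *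
      (∏ j, 2 * Real.Gamma ((2 * (Real.pi * y ^ ((2:ℝ)/m)) + κ j) / 2 + 2)) * 4 *
      y ^ (-(2 * (Real.pi * y ^ ((2:ℝ)/m)))) ≤
    (4 * 2 ^ m * Real.exp 1 ^ m * Real.exp (((∑ j, κ j) / 2 + 2) * m) *
        (Real.pi + ((∑ j, κ j) / 2 + 2)) ^ ((m:ℝ)/2 + m * ((∑ j, κ j) / 2 + 2))) *
      Real.exp (-(m:ℝ) * Real.pi * y ^ ((2:ℝ)/m)) *
      y ^ (2 * ((m:ℝ)/2 + m * ((∑ j, κ j) / 2 + 2))) := by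
  have hm0 : (0:ℝ) < m := by exact_mod_cast hm
  set B : ℝ := (∑ j, κ j) / 2 + 2 with hBdef
  have hsum : (0:ℝ) ≤ ∑ j, κ j := Finset.sum_nonneg fun j _ => hκ j
  have hB2 : (2:ℝ) ≤ B := by rw [hBdef]; linarith
  set E : ℝ := (m:ℝ)/2 + m * B with hEdef
  have hE0 : 0 < E := by rw [hEdef]; positivity
  set u : ℝ := y ^ ((2:ℝ)/m) with hudef
  have hy0 : (0:ℝ) < y := by linarith
  have hu1 : (1:ℝ) ≤ u := Real.one_le_rpow hy.le (by positivity)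
  have hu0 : (0:ℝ) < u := by linarith
  set x₀ : ℝ := Real.pi * u with hxdef
  have hπ3 : (3:ℝ) < Real.pi := Real.pi_gt_three
  have hx₀3 : (3:ℝ) ≤ x₀ := by
    calc (3:ℝ) ≤ Real.pi * 1 := by linarith
      _ ≤ Real.pi * u := by nlinarith
  have hx₀0 : (0:ℝ) < x₀ := by linarith
  set R : ℝ := x₀ + B with hRdef
  have hR2 : (2:ℝ) ≤ R := by rw [hRdef]; linarith
  have hR0 : (0:ℝ) < R := by linarith
  -- Step (i): product bound
  have hprod : (∏ j, 2 * Real.Gamma ((2 * x₀ + κ j) / 2 + 2)) ≤ 2 ^ m * Real.Gamma R ^ m := by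
    have hstep : ∀ j : Fin m, 2 * Real.Gamma ((2 * x₀ + κ j) / 2 + 2) ≤ 2 * Real.Gamma R := by
      intro j
      have hj := hκ j
      have hjB : κ j / 2 + 2 ≤ B := by
        rw [hBdef]
        have : κ j ≤ ∑ i, κ i := Finset.single_le_sum (fun i _ => hκ i) (Finset.mem_univ j)
        linarith
      have harg : (2 * x₀ + κ j) / 2 + 2 ≤ R := by rw [hRdef]; linarith
      have hmem1 : (2 * x₀ + κ j) / 2 + 2 ∈ Set.Ici (2:ℝ) := by
        simp only [Set.mem_Ici]; linarith
      have := Real.Gamma_strictMonoOn_Ici.monotoneOn hmem1 (Set.mem_Ici.mpr hR2) harg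
      linarith
    calc (∏ j, 2 * Real.Gamma ((2 * x₀ + κ j) / 2 + 2)) ≤ ∏ _j : Fin m, 2 * Real.Gamma R :=
          Finset.prod_le_prod (fun j _ => by
            have := Real.Gamma_pos_of_pos (show (0:ℝ) < (2 * x₀ + κ j) / 2 + 2 by
              have := hκ j; linarith)
            linarith) (fun j _ => hstep j)
      _ = (2 * Real.Gamma R) ^ m := by rw [Finset.prod_const, Finset.card_univ, Fintype.card_fin]
      _ = 2 ^ m * Real.Gamma R ^ m := mul_pow 2 _ m
  -- Step (ii)+(iii): Stirling
  have hΓ : Real.Gamma R ≤ Real.exp 1 * Real.sqrt R * (R / Real.exp 1) ^ R :=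
    Gamma_le_stirling hR2
  have hΓnn : 0 ≤ Real.Gamma R := (Real.Gamma_pos_of_pos hR0).le
  have hΓm : Real.Gamma R ^ m ≤
      Real.exp 1 ^ m * Real.sqrt R ^ m * ((R / Real.exp 1) ^ R) ^ m := by
    calc Real.Gamma R ^ m ≤ (Real.exp 1 * Real.sqrt R * (R / Real.exp 1) ^ R) ^ m :=
          pow_le_pow_left₀ hΓnn hΓ m
      _ = Real.exp 1 ^ m * Real.sqrt R ^ m * ((R / Real.exp 1) ^ R) ^ m := by
          rw [mul_pow, mul_pow]
  -- (r^R)^m = r^(R*m) split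
  have hrm : ((R / Real.exp 1) ^ R) ^ m = (R / Real.exp 1) ^ (x₀ * m) * (R / Real.exp 1) ^ (B * m) := by
    have h0 : (0:ℝ) ≤ R / Real.exp 1 := by positivity
    rw [← Real.rpow_natCast ((R / Real.exp 1) ^ R) m, ← Real.rpow_mul h0, ← Real.rpow_add (by positivity)]
    congr 1
    rw [hRdef]; ring
  -- r^(B*m) ≤ R^(B*m)
  have hrBm : (R / Real.exp 1) ^ (B * m) ≤ R ^ (B * m) :=
    Real.rpow_le_rpow (by positivity)
      (div_le_self hR0.le (by linarith [Real.exp_one_gt_d9])) (by positivity)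
  -- r^(x₀*m) ≤ (x₀/e)^(x₀*m) * exp (B*m)
  have hrx : (R / Real.exp 1) ^ (x₀ * m) ≤ (x₀ / Real.exp 1) ^ (x₀ * m) * Real.exp (B * m) := by
    have h1 : R ≤ x₀ * Real.exp (B / x₀) := by
      have := Real.add_one_le_exp (B / x₀)
      calc R = x₀ * (1 + B / x₀) := by rw [hRdef]; field_simp
        _ ≤ x₀ * Real.exp (B / x₀) := by
          apply mul_le_mul_of_nonneg_left _ hx₀0.le
          linarith
    have h2 : R / Real.exp 1 ≤ (x₀ / Real.exp 1) * Real.exp (B / x₀) := by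
      rw [div_mul_eq_mul_div]
      gcongr
    calc (R / Real.exp 1) ^ (x₀ * m)
        ≤ ((x₀ / Real.exp 1) * Real.exp (B / x₀)) ^ (x₀ * m) :=
          Real.rpow_le_rpow (by positivity) h2 (by positivity)
      _ = (x₀ / Real.exp 1) ^ (x₀ * m) * (Real.exp (B / x₀)) ^ (x₀ * m) :=
          Real.mul_rpow (by positivity) (by positivity)
      _ = (x₀ / Real.exp 1) ^ (x₀ * m) * Real.exp (B * m) := by
          rw [← Real.exp_mul]
          congr 2
          field_simp
  -- (x₀/e)^(x₀*m) * π^(-(m*x₀)) = (u/e)^(x₀*m)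
  have hπcancel : (x₀ / Real.exp 1) ^ (x₀ * m) * Real.pi ^ (-((m:ℝ) * x₀)) =
      (u / Real.exp 1) ^ (x₀ * m) := by
    have hsplit : x₀ / Real.exp 1 = Real.pi * (u / Real.exp 1) := by
      rw [hxdef]; ring
    rw [hsplit, Real.mul_rpow Real.pi_pos.le (by positivity),
      Real.rpow_neg Real.pi_pos.le]
    have : Real.pi ^ (x₀ * m) * (Real.pi ^ ((m:ℝ) * x₀))⁻¹ = 1 := by
      rw [mul_comm ((m:ℝ)) x₀]
      exact mul_inv_cancel₀ (by positivity)
    calc Real.pi ^ (x₀ * m) * (u / Real.exp 1) ^ (x₀ * m) * (Real.pi ^ ((m:ℝ) * x₀))⁻¹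
        = (Real.pi ^ (x₀ * m) * (Real.pi ^ ((m:ℝ) * x₀))⁻¹) * (u / Real.exp 1) ^ (x₀ * m) := by
          ring
      _ = (u / Real.exp 1) ^ (x₀ * m) := by rw [this, one_mul]
  -- (u/e)^(x₀*m) * y^(-(2*x₀)) = exp (-(m*π*u))
  have hmain : (u / Real.exp 1) ^ (x₀ * m) * y ^ (-(2 * x₀)) = Real.exp (-((m:ℝ) * Real.pi * u)) := by
    have h1 : (u / Real.exp 1) ^ (x₀ * m) = u ^ (x₀ * m) * (Real.exp (x₀ * m))⁻¹ := by
      rw [Real.div_rpow hu0.le (Real.exp_pos 1).le, ← Real.exp_mul, one_mul]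
      rw [div_eq_mul_inv]
    have h2 : u ^ (x₀ * m) = y ^ (2 * x₀) := by
      rw [hudef, ← Real.rpow_mul hy0.le]
      congr 1
      field_simp
    have h3 : y ^ (2 * x₀) * y ^ (-(2 * x₀)) = 1 := by
      rw [← Real.rpow_add hy0, add_neg_cancel, Real.rpow_zero]
    have h4 : (Real.exp (x₀ * m))⁻¹ = Real.exp (-((m:ℝ) * Real.pi * u)) := by
      rw [← Real.exp_neg]
      congr 1
      rw [hxdef]; ring
    calc (u / Real.exp 1) ^ (x₀ * m) * y ^ (-(2 * x₀))
        = (y ^ (2 * x₀) * y ^ (-(2 * x₀))) * (Real.exp (x₀ * m))⁻¹ := by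
          rw [h1, h2]; ring
      _ = Real.exp (-((m:ℝ) * Real.pi * u)) := by rw [h3, one_mul, h4]
  -- sqrt and polynomial part
  have hsq : Real.sqrt R ^ m * R ^ (B * m) = R ^ E := by
    rw [Real.sqrt_eq_rpow, ← Real.rpow_natCast (R ^ ((1:ℝ)/2)) m, ← Real.rpow_mul hR0.le,
      ← Real.rpow_add hR0, hEdef]
    congr 1
    ring
  have hRE : R ^ E ≤ (Real.pi + B) ^ E * y ^ (2 * E) := by
    have h1 : R ≤ (Real.pi + B) * u := by
      rw [hRdef, hxdef]
      nlinarith [hB2, hu1]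
    calc R ^ E ≤ ((Real.pi + B) * u) ^ E :=
          Real.rpow_le_rpow hR0.le h1 hE0.le
      _ = (Real.pi + B) ^ E * u ^ E := Real.mul_rpow (by positivity) hu0.le
      _ ≤ (Real.pi + B) ^ E * y ^ (2 * E) := by
          apply mul_le_mul_of_nonneg_left _ (by positivity)
          rw [hudef, ← Real.rpow_mul hy0.le]
          apply Real.rpow_le_rpow_of_exponent_le hy.le
          have hdm : (2:ℝ) / m ≤ 2 := by
            rw [div_le_iff₀ hm0]
            have : (1:ℝ) ≤ (m:ℝ) := by exact_mod_cast hm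
            nlinarith
          calc 2 / (m:ℝ) * E ≤ 2 * E := mul_le_mul_of_nonneg_right hdm hE0.le
            _ = 2 * E := rfl
  -- put everything together
  have hexp : Real.pi ^ (-(m:ℝ) * (2 * x₀) / 2) = Real.pi ^ (-((m:ℝ) * x₀)) := by
    congr 1; ring
  have hπnn : (0:ℝ) ≤ Real.pi ^ (-((m:ℝ) * x₀)) := Real.rpow_nonneg Real.pi_pos.le _
  have hynn : (0:ℝ) ≤ y ^ (-(2 * x₀)) := Real.rpow_nonneg hy0.le _
  have hprodnn : (0:ℝ) ≤ ∏ j, 2 * Real.Gamma ((2 * x₀ + κ j) / 2 + 2) :=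
    Finset.prod_nonneg fun j _ => by
      have := Real.Gamma_pos_of_pos (show (0:ℝ) < (2 * x₀ + κ j) / 2 + 2 by
        have := hκ j; linarith)
      linarith
  rw [hexp]
  calc Real.pi ^ (-((m:ℝ) * x₀)) * (∏ j, 2 * Real.Gamma ((2 * x₀ + κ j) / 2 + 2)) * 4 *
        y ^ (-(2 * x₀))
      ≤ Real.pi ^ (-((m:ℝ) * x₀)) * (2 ^ m * (Real.exp 1 ^ m * Real.sqrt R ^ m *
          ((R / Real.exp 1) ^ (x₀ * m) * (R / Real.exp 1) ^ (B * m)))) * 4 * y ^ (-(2 * x₀)) := by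
        apply mul_le_mul_of_nonneg_right _ hynn
        apply mul_le_mul_of_nonneg_right _ (by norm_num)
        apply mul_le_mul_of_nonneg_left _ hπnn
        refine hprod.trans ?_
        apply mul_le_mul_of_nonneg_left _ (by positivity)
        rw [← hrm]
        exact hΓm
    _ ≤ Real.pi ^ (-((m:ℝ) * x₀)) * (2 ^ m * (Real.exp 1 ^ m * Real.sqrt R ^ m *
          (((x₀ / Real.exp 1) ^ (x₀ * m) * Real.exp (B * m)) * R ^ (B * m)))) * 4 *
          y ^ (-(2 * x₀)) := by
        apply mul_le_mul_of_nonneg_right _ hynn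
        apply mul_le_mul_of_nonneg_right _ (by norm_num)
        apply mul_le_mul_of_nonneg_left _ hπnn
        apply mul_le_mul_of_nonneg_left _ (by positivity)
        apply mul_le_mul_of_nonneg_left _ (by positivity)
        exact mul_le_mul hrx hrBm (by positivity) (by positivity)
    _ = (4 * 2 ^ m * Real.exp 1 ^ m * Real.exp (B * m)) *
          ((x₀ / Real.exp 1) ^ (x₀ * m) * Real.pi ^ (-((m:ℝ) * x₀))) *
          (Real.sqrt R ^ m * R ^ (B * m)) * y ^ (-(2 * x₀)) := by ring
    _ = (4 * 2 ^ m * Real.exp 1 ^ m * Real.exp (B * m)) * R ^ E *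
          ((u / Real.exp 1) ^ (x₀ * m) * y ^ (-(2 * x₀))) := by
        rw [hπcancel, hsq]; ring
    _ = (4 * 2 ^ m * Real.exp 1 ^ m * Real.exp (B * m)) * R ^ E *
          Real.exp (-((m:ℝ) * Real.pi * u)) := by rw [hmain]
    _ ≤ (4 * 2 ^ m * Real.exp 1 ^ m * Real.exp (B * m)) *
          ((Real.pi + B) ^ E * y ^ (2 * E)) * Real.exp (-((m:ℝ) * Real.pi * u)) := by
        apply mul_le_mul_of_nonneg_right _ (Real.exp_pos _).le
        exact mul_le_mul_of_nonneg_left hRE (by positivity)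
    _ = (4 * 2 ^ m * Real.exp 1 ^ m * Real.exp (B * m) * (Real.pi + B) ^ E) *
          Real.exp (-(m:ℝ) * Real.pi * u) * y ^ (2 * E) := by
        rw [show -((m:ℝ) * Real.pi * u) = -(m:ℝ) * Real.pi * u by ring]
        ring

end
end Aux

/-- Rapid decay of the inverse Mellin transform of the gamma factor:
`|W(y)| ≤ C e^{-mπ y^{2/m}} y^A` for `y > 1`. -/
theorem WFun_bound (m : ℕ) (hm : 1 ≤ m) (κ : Fin m → ℝ) (hκ : ∀ j, 0 ≤ κ j) :
    ∃ A : ℝ, 0 < A ∧ ∃ C : ℝ, 0 < C ∧ ∀ y : ℝ, 1 < y →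
      ‖WFun m κ y‖ ≤ C * Real.exp (-(m : ℝ) * Real.pi * y ^ ((2 : ℝ) / m)) * y ^ A := by
  have hm0 : (0:ℝ) < m := by exact_mod_cast hm
  set B : ℝ := (∑ j, κ j) / 2 + 2 with hBdef
  have hsum : (0:ℝ) ≤ ∑ j, κ j := Finset.sum_nonneg fun j _ => hκ j
  have hB2 : (2:ℝ) ≤ B := by rw [hBdef]; linarith
  set E : ℝ := (m:ℝ)/2 + m * B with hEdef
  have hE0 : 0 < E := by rw [hEdef]; positivity
  refine ⟨2 * E, by positivity, ?_⟩
  set C₀ : ℝ := 4 * 2 ^ m * Real.exp 1 ^ m * Real.exp (B * m) * (Real.pi + B) ^ E with hC₀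
  have hC₀pos : 0 < C₀ := by
    rw [hC₀]
    have : (0:ℝ) < Real.pi + B := by linarith [Real.pi_pos]
    positivity
  refine ⟨C₀ / 2, by positivity, ?_⟩
  intro y hy
  have hy0 : (0:ℝ) < y := by linarith
  set u : ℝ := y ^ ((2:ℝ)/m) with hudef
  have hu1 : (1:ℝ) ≤ u := Real.one_le_rpow hy.le (by positivity)
  set σ : ℝ := 2 * (Real.pi * u) with hσdef
  have hσ2 : (2:ℝ) ≤ σ := by
    rw [hσdef]
    nlinarith [Real.pi_gt_three]
  -- contour shift
  have hshift := contour_shift hm hκ hσ2 hy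
  have hcast : (((2:ℝ):ℂ)) = (2:ℂ) := by norm_num
  rw [hcast] at hshift
  -- norm of the integral on the line σ
  set Cσ : ℝ := Real.pi ^ (-(m:ℝ) * σ / 2) * (∏ j, 2 * Real.Gamma ((σ + κ j) / 2 + 2)) * 4 *
    y ^ (-σ) with hCσ
  have hI : ‖∫ t : ℝ, gammaFactor m κ ((σ:ℂ) + t * I) * (y : ℂ) ^ (-((σ:ℂ) + t * I))‖ ≤
      Cσ * Real.pi := by
    have hptw : ∀ t : ℝ, ‖gammaFactor m κ ((σ:ℂ) + t * I) * (y : ℂ) ^ (-((σ:ℂ) + t * I))‖ ≤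
        Cσ * (1 + t ^ 2)⁻¹ := by
      intro t
      refine (norm_integrand_le hm hκ t hσ2 hy0).trans_eq ?_
      rw [hCσ]; ring
    have h1 := MeasureTheory.norm_integral_le_of_norm_le
      (integrable_inv_one_add_sq.const_mul Cσ)
      (Filter.Eventually.of_forall hptw)
    rwa [integral_const_mul, integral_univ_inv_one_add_sq] at h1
  -- the key estimate
  have hkey : Cσ ≤ C₀ * Real.exp (-(m:ℝ) * Real.pi * y ^ ((2:ℝ)/m)) * y ^ (2 * E) := by
    have := key_estimate hm hκ hy
    rw [hCσ, hσdef, hudef, hC₀, hEdef, hBdef]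
    convert this using 2
  -- final computation
  have hWnorm : ‖WFun m κ y‖ = (1 / (2 * Real.pi)) *
      ‖∫ t : ℝ, gammaFactor m κ (2 + t * Complex.I) * (y : ℂ) ^ (-(2 + t * Complex.I))‖ := by
    rw [WFun, norm_smul]
    congr 1
    rw [Real.norm_eq_abs, abs_of_pos (by positivity)]
  have hexp0 : (0:ℝ) < Real.exp (-(m:ℝ) * Real.pi * y ^ ((2:ℝ)/m)) := Real.exp_pos _
  calc ‖WFun m κ y‖
      = (1 / (2 * Real.pi)) *
        ‖∫ t : ℝ, gammaFactor m κ ((σ:ℂ) + t * I) * (y : ℂ) ^ (-((σ:ℂ) + t * I))‖ := by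
        rw [hWnorm, hshift]
    _ ≤ (1 / (2 * Real.pi)) * (Cσ * Real.pi) := by
        apply mul_le_mul_of_nonneg_left hI (by positivity)
    _ = Cσ / 2 := by
        field_simp
    _ ≤ (C₀ * Real.exp (-(m:ℝ) * Real.pi * y ^ ((2:ℝ)/m)) * y ^ (2 * E)) / 2 := by
        linarith [hkey]
    _ = C₀ / 2 * Real.exp (-(m:ℝ) * Real.pi * y ^ ((2:ℝ)/m)) * y ^ (2 * E) := by ring
end

section
/- Let m ≥ 1 be an integer and let D be a squarefree integer with D ≡ 3 (mod 4) and D > 4m. Then the number of nonzero ideals I of the ring of integers of the imaginary quadratic field ℚ(√−D) with absolute norm N(I) = m that are principal equals 1 if m is a perfect square, and equals 0 otherwise. -/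
open NumberField

/-- If `D` is squarefree and `D * r ^ 2` is an integer, then `r` is an integer. -/
lemma aux_den_one (D : ℕ) (hD : Squarefree D) (r : ℚ) (n : ℤ)
    (h : (n : ℚ) = (D : ℚ) * r ^ 2) : ∃ u : ℤ, (u : ℚ) = r := by
  have hden0 : ((r.den : ℚ)) ≠ 0 := by
    exact_mod_cast r.den_ne_zero
  have hr : r * (r.den : ℚ) = (r.num : ℚ) := by
    calc r * (r.den : ℚ) = ((r.num : ℚ) / (r.den : ℚ)) * (r.den : ℚ) := by
          rw [Rat.num_div_den]
    _ = (r.num : ℚ) := div_mul_cancel₀ _ hden0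
  have hden : (n : ℚ) * (r.den : ℚ) ^ 2 = (D : ℚ) * (r.num : ℚ) ^ 2 := by
    rw [h, ← hr]
    ring
  have hint : n * (r.den : ℤ) ^ 2 = (D : ℤ) * r.num ^ 2 := by exact_mod_cast hden
  have hdvd : ((r.den : ℤ)) ^ 2 ∣ (D : ℤ) * r.num ^ 2 := ⟨n, by linarith [hint]⟩
  have hdvdN : r.den ^ 2 ∣ D * r.num.natAbs ^ 2 := by
    have := Int.natAbs_dvd_natAbs.mpr hdvd
    simpa [Int.natAbs_mul, Int.natAbs_pow] using this
  have hcop : Nat.Coprime (r.den ^ 2) (r.num.natAbs ^ 2) :=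
    Nat.Coprime.pow 2 2 r.reduced.symm
  have hdvdD : r.den ^ 2 ∣ D := (Nat.Coprime.dvd_of_dvd_mul_right hcop hdvdN)
  have hdvdD' : r.den * r.den ∣ D := by rwa [pow_two] at hdvdD
  have hden1 : r.den = 1 := Nat.isUnit_iff.mp (hD r.den hdvdD')
  exact ⟨r.num, by rw [← Rat.num_div_den r, hden1]; simp⟩

/-- The key structural lemma: any algebraic integer of `K` whose norm has
absolute value `m < D / 4` is a rational integer `s` with `s ^ 2 = m`. -/
lemma aux_key (m : ℕ) (D : ℕ) (hD : Squarefree D) (hDm : 4 * m < D)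
    (K : Type) [Field K] [NumberField K]
    (α : K) (hα : α ^ 2 = -(D : K)) (hdeg : Module.finrank ℚ K = 2)
    (x : 𝓞 K) (hx : (Algebra.norm ℤ x).natAbs = m) :
    ∃ s : ℤ, s ^ 2 = (m : ℤ) ∧ x = algebraMap ℤ (𝓞 K) s := by
  have hD0 : 0 < D := Nat.lt_of_le_of_lt (Nat.zero_le _) hDm
  have hDQ : (0 : ℚ) < (D : ℚ) := by exact_mod_cast hD0
  -- `1, α` are linearly independent over `ℚ`
  have hli : LinearIndependent ℚ ![(1 : K), α] := by
    rw [LinearIndependent.pair_iff]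
    intro s t hst
    by_contra hc
    have ht : t ≠ 0 := by
      intro ht0
      subst ht0
      simp only [zero_smul, add_zero, smul_eq_zero, one_ne_zero, or_false] at hst
      exact hc ⟨hst, rfl⟩
    have hαval : α = algebraMap ℚ K (-s / t) := by
      have h1 : t • α = -(s • (1 : K)) := by
        rw [add_comm] at hst
        rwa [add_eq_zero_iff_eq_neg] at hst
      have h2 : α = (t⁻¹ * (-s)) • (1 : K) := by
        rw [mul_smul]
        rw [show (-s) • (1:K) = -(s • (1:K)) by simp, ← h1, ← mul_smul,
          inv_mul_cancel₀ ht, one_smul]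
      rw [h2, Algebra.algebraMap_eq_smul_one]
      congr 1
      field_simp
    have hsq : ((-s / t) ^ 2 : ℚ) = -(D : ℚ) := by
      have : (algebraMap ℚ K) ((-s / t) ^ 2) = (algebraMap ℚ K) (-(D : ℚ)) := by
        rw [map_pow, ← hαval, hα]; simp
      exact (algebraMap ℚ K).injective this
    nlinarith [sq_nonneg ((-s / t : ℚ)), hsq]
  have hcard : Fintype.card (Fin 2) = Module.finrank ℚ K := by simp [hdeg]
  set B : Module.Basis (Fin 2) ℚ K := basisOfLinearIndependentOfCardEqFinrank hli hcard with hBdef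
  have hB : ⇑B = ![(1 : K), α] := coe_basisOfLinearIndependentOfCardEqFinrank hli hcard
  have hB0 : B 0 = 1 := by rw [hB]; rfl
  have hB1 : B 1 = α := by rw [hB]; rfl
  -- representation of combinations
  have hrepr : ∀ c d : ℚ, B.repr (c • B 0 + d • B 1)
      = c • Finsupp.single 0 1 + d • Finsupp.single 1 1 := by
    intro c d
    rw [map_add, map_smul, map_smul, B.repr_self, B.repr_self]
  have hrepr0 : ∀ c d : ℚ, B.repr (c • B 0 + d • B 1) 0 = c := by
    intro c d; rw [hrepr]; simp
  have hrepr1 : ∀ c d : ℚ, B.repr (c • B 0 + d • B 1) 1 = d := by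
    intro c d; rw [hrepr]; simp
  -- norm formula
  have normf : ∀ a b : ℚ, Algebra.norm ℚ (a • B 0 + b • B 1)
      = a ^ 2 + (D : ℚ) * b ^ 2 := by
    intro a b
    set z : K := a • B 0 + b • B 1 with hz
    have h0 : z * B 0 = a • B 0 + b • B 1 := by rw [hB0, mul_one, hz, hB0]
    have hDK : algebraMap ℚ K ((D : ℚ)) = (D : K) := map_natCast _ D
    have h1 : z * B 1 = (-(D : ℚ) * b) • B 0 + a • B 1 := by
      have hα1 : α * α = -(D : K) := by rw [← pow_two]; exact hα
      have hDsmul : b • (-(D : K)) = (-(D : ℚ) * b) • (1 : K) := by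
        rw [← hDK, ← map_neg, Algebra.smul_def, Algebra.smul_def, mul_one, ← map_mul]
        congr 1
        ring
      rw [hz, hB0, hB1]
      rw [add_mul, smul_mul_assoc, smul_mul_assoc, one_mul, hα1, hDsmul]
      rw [add_comm]
    rw [Algebra.norm_eq_matrix_det B z, Matrix.det_fin_two]
    rw [Algebra.leftMulMatrix_eq_repr_mul, Algebra.leftMulMatrix_eq_repr_mul,
      Algebra.leftMulMatrix_eq_repr_mul, Algebra.leftMulMatrix_eq_repr_mul]
    rw [h0, h1, hrepr0, hrepr1, hrepr0, hrepr1]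
    ring
  -- coordinates of x
  obtain ⟨a, b, hab⟩ : ∃ a b : ℚ, (x : K) = a • B 0 + b • B 1 := by
    refine ⟨B.repr (x : K) 0, B.repr (x : K) 1, ((B.sum_repr (x : K)).symm.trans ?_)⟩
    rw [Fin.sum_univ_two]
  -- the norm of x equals m
  have hnormx : ((Algebra.norm ℤ x : ℤ) : ℚ) = a ^ 2 + (D : ℚ) * b ^ 2 := by
    rw [Algebra.coe_norm_int, hab, normf]
  have hnonneg : (0 : ℚ) ≤ a ^ 2 + (D : ℚ) * b ^ 2 := by positivity
  have hmQ : (m : ℚ) = a ^ 2 + (D : ℚ) * b ^ 2 := by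
    have h1 : (0 : ℤ) ≤ Algebra.norm ℤ x := by
      by_contra hneg
      push_neg at hneg
      have : ((Algebra.norm ℤ x : ℤ) : ℚ) < 0 := by exact_mod_cast hneg
      linarith [hnormx ▸ this]
    have h2 : Algebra.norm ℤ x = (m : ℤ) := by
      rw [← hx]
      exact (Int.natAbs_of_nonneg h1).symm
    rw [h2] at hnormx
    exact_mod_cast hnormx
  -- norm of x + 1 gives that 2a is an integer
  have hnormx1 : ((Algebra.norm ℤ (x + 1) : ℤ) : ℚ) = (a + 1) ^ 2 + (D : ℚ) * b ^ 2 := by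
    rw [Algebra.coe_norm_int]
    have hcoe : ((x + 1 : 𝓞 K) : K) = (x : K) + 1 := by
      rw [NumberField.RingOfIntegers.coe_eq_algebraMap,
        NumberField.RingOfIntegers.coe_eq_algebraMap, map_add, map_one]
    have hxx : ((x + 1 : 𝓞 K) : K) = (a + 1) • B 0 + b • B 1 := by
      rw [hcoe, hab, add_smul, one_smul, hB0]
      abel
    rw [hxx, normf]
  obtain ⟨t, h2a⟩ : ∃ t : ℤ, (t : ℚ) = 2 * a :=
    ⟨Algebra.norm ℤ (x + 1) - m - 1, by push_cast; linarith [hmQ, hnormx1]⟩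
  -- D * (2b)^2 is the integer 4m - t^2
  have hDb : ((4 * m - t ^ 2 : ℤ) : ℚ) = (D : ℚ) * (2 * b) ^ 2 := by
    push_cast
    linear_combination (4 : ℚ) * hmQ - ((t : ℚ) + 2 * a) * h2a
  obtain ⟨u, hu⟩ := aux_den_one D hD (2 * b) (4 * m - t ^ 2) hDb
  have huInt : 4 * (m : ℤ) - t ^ 2 = (D : ℤ) * u ^ 2 := by
    have : ((4 * m - t ^ 2 : ℤ) : ℚ) = ((D : ℤ) * u ^ 2 : ℤ) := by
      rw [hDb, ← hu]; push_cast; ring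
    exact_mod_cast this
  -- u must be 0 since D > 4m
  have hu0 : u = 0 := by
    by_contra hu0
    have h1 : (1 : ℤ) ≤ u ^ 2 := by
      have := Int.one_le_abs (by exact_mod_cast hu0 : u ≠ 0)
      nlinarith [sq_abs u]
    have hDZ : (4 * (m : ℤ)) < (D : ℤ) := by exact_mod_cast hDm
    nlinarith [sq_nonneg t]
  have hb0 : b = 0 := by
    have : (u : ℚ) = 2 * b := hu
    rw [hu0] at this
    push_cast at this
    linarith
  -- t^2 = 4m, so t is even
  have ht4m : t ^ 2 = 4 * (m : ℤ) := by
    rw [hu0] at huInt; simp at huInt; linarith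
  have hteven : (2 : ℤ) ∣ t := by
    have h2 : (2 : ℤ) ∣ t ^ 2 := ⟨2 * m, by linarith⟩
    exact Int.prime_two.dvd_of_dvd_pow h2
  obtain ⟨s, hs⟩ := hteven
  refine ⟨s, ?_, ?_⟩
  · have h4s : t ^ 2 = 4 * s ^ 2 := by rw [hs]; ring
    linarith [ht4m, h4s]
  · have ha : a = (s : ℚ) := by
      have : ((t : ℤ) : ℚ) = 2 * a := h2a
      rw [hs] at this
      push_cast at this
      linarith
    have hxK : (x : K) = algebraMap ℤ K s := by
      rw [hab, hb0, zero_smul, add_zero, hB0, ha]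
      rw [Algebra.smul_def, mul_one]
      rw [show algebraMap ℚ K ((s : ℚ)) = algebraMap ℤ K s by
        rw [map_intCast, eq_intCast]]
    apply NumberField.RingOfIntegers.ext
    rw [hxK, NumberField.RingOfIntegers.coe_eq_algebraMap]
    exact (IsScalarTower.algebraMap_apply ℤ (𝓞 K) K s).symm

/-- For a squarefree `D ≡ 3 (mod 4)` with `D > 4m`, the number of nonzero principal
ideals of norm `m` in the ring of integers of the imaginary quadratic field
`ℚ(√-D)` (any number field of degree 2 over `ℚ` containing a square root of `-D`)
is `1` if `m` is a perfect square and `0` otherwise. -/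
theorem count_principal_ideals_of_norm (m : ℕ) (hm : 1 ≤ m)
    (D : ℕ) (hD : Squarefree D) (hD4 : D % 4 = 3) (hDm : 4 * m < D)
    (K : Type) [Field K] [NumberField K]
    (α : K) (hα : α ^ 2 = -(D : K)) (hdeg : Module.finrank ℚ K = 2) :
    {I : Ideal (𝓞 K) | Ideal.absNorm I = m ∧ I ≠ ⊥ ∧ Submodule.IsPrincipal I}.ncard
      = if IsSquare m then 1 else 0 := by
  classical
  by_cases hsq : IsSquare m
  · rw [if_pos hsq]
    obtain ⟨r, hr⟩ := hsq
    have hr0 : r ≠ 0 := by rintro rfl; simp at hr; omega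
    have hset : {I : Ideal (𝓞 K) | Ideal.absNorm I = m ∧ I ≠ ⊥ ∧ Submodule.IsPrincipal I}
        = {Ideal.span {algebraMap ℤ (𝓞 K) (r : ℤ)}} := by
      ext I
      simp only [Set.mem_setOf_eq, Set.mem_singleton_iff]
      constructor
      · rintro ⟨hnorm, hbot, ⟨x, hxI⟩⟩
        have hnormx : (Algebra.norm ℤ x).natAbs = m := by
          rw [hxI] at hnorm
          rw [← hnorm]
          exact (Ideal.absNorm_span_singleton x).symm
        obtain ⟨s, hs2, hxs⟩ := aux_key m D hD hDm K α hα hdeg x hnormx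
        have hsr : s = (r : ℤ) ∨ s = -(r : ℤ) := by
          have h : s ^ 2 = ((r : ℤ)) ^ 2 := by
            rw [hs2, hr]; push_cast; ring
          have hnat : s.natAbs ^ 2 = r ^ 2 := by
            have := congrArg Int.natAbs h
            simpa [Int.natAbs_pow] using this
          have habs : s.natAbs = r := Nat.pow_left_injective (by norm_num) hnat
          rcases Int.natAbs_eq s with h1 | h1
          · exact Or.inl (by rw [h1, habs])
          · exact Or.inr (by rw [h1, habs])
        rw [hxI, hxs]
        rcases hsr with h1 | h1
        · rw [h1]
        · rw [h1, map_neg]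
          exact Ideal.span_singleton_neg _
      · rintro rfl
        have hrne : algebraMap ℤ (𝓞 K) (r : ℤ) ≠ 0 := by
          intro h
          have : ((r : ℤ) : 𝓞 K) = 0 := by simpa using h
          have : ((r : ℤ) : K) = 0 := by
            have := congrArg (algebraMap (𝓞 K) K) h
            simpa [← IsScalarTower.algebraMap_apply] using this
          have : (r : ℤ) = 0 := by exact_mod_cast this
          exact hr0 (by exact_mod_cast this)
        refine ⟨?_, ?_, ⟨_, rfl⟩⟩
        · rw [Ideal.absNorm_span_singleton]
          have hcast : ((Algebra.norm ℤ (algebraMap ℤ (𝓞 K) (r : ℤ)) : ℤ) : ℚ)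
              = ((r : ℤ) : ℚ) ^ 2 := by
            rw [Algebra.coe_norm_int]
            have : ((algebraMap ℤ (𝓞 K) (r : ℤ) : 𝓞 K) : K) = algebraMap ℚ K ((r : ℤ) : ℚ) := by
              rw [NumberField.RingOfIntegers.coe_eq_algebraMap,
                ← IsScalarTower.algebraMap_apply ℤ (𝓞 K) K]
              simp
            rw [this, Algebra.norm_algebraMap, hdeg]
          have : Algebra.norm ℤ (algebraMap ℤ (𝓞 K) (r : ℤ)) = (r : ℤ) ^ 2 := by
            exact_mod_cast hcast
          rw [this]
          rw [hr]
          simp [Int.natAbs_mul, pow_two]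
        · rw [Ne, Ideal.span_singleton_eq_bot]
          exact hrne
    rw [hset, Set.ncard_singleton]
  · rw [if_neg hsq]
    have hset : {I : Ideal (𝓞 K) | Ideal.absNorm I = m ∧ I ≠ ⊥ ∧ Submodule.IsPrincipal I}
        = (∅ : Set (Ideal (𝓞 K))) := by
      ext I
      simp only [Set.mem_setOf_eq, Set.mem_empty_iff_false, iff_false]
      rintro ⟨hnorm, hbot, ⟨x, hxI⟩⟩
      have hnormx : (Algebra.norm ℤ x).natAbs = m := by
        rw [hxI] at hnorm
        rw [← hnorm]
        exact (Ideal.absNorm_span_singleton x).symm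
      obtain ⟨s, hs2, _⟩ := aux_key m D hD hDm K α hα hdeg x hnormx
      apply hsq
      refine ⟨s.natAbs, ?_⟩
      have : (s.natAbs : ℤ) * (s.natAbs : ℤ) = (m : ℤ) := by
        rw [Int.natAbs_mul_self']
        linear_combination hs2
      exact_mod_cast this.symm
    rw [hset, Set.ncard_empty]
end

section
/- Let (a, b) ∈ ℤ² with 4a³ ≠ 27b². Then there exist a unique positive integer n and a unique minimal pair (a₀, b₀) ∈ ℤ² such that a = n⁴·a₀ and b = n⁶·b₀. -/
/-- A pair `(a, b) ∈ ℤ²` is minimal if no prime `p` satisfies `p⁴ ∣ a` and `p⁶ ∣ b`. -/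
def MinimalPair (a b : ℤ) : Prop :=
  ∀ p : ℕ, p.Prime → ¬((p : ℤ) ^ 4 ∣ a ∧ (p : ℤ) ^ 6 ∣ b)

private lemma key_dvd {p n m : ℕ} (hp : p.Prime) (hm : m ≠ 0) {c₀ c₁ : ℤ}
    (e : ℕ) (he : 0 < e) {k : ℕ} (hpk : p ^ k ∣ n) (hkl : m.factorization p < k)
    (heq : (n : ℤ) ^ e * c₀ = (m : ℤ) ^ e * c₁) :
    (p : ℤ) ^ e ∣ c₁ := by
  set l := m.factorization p with hl
  -- (p:ℤ)^(e*k) ∣ n^e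
  have h1 : (p : ℤ) ^ (e * k) ∣ (n : ℤ) ^ e := by
    have h0 : ((p : ℤ) ^ k) ∣ (n : ℤ) := by exact_mod_cast Int.natCast_dvd_natCast.2 hpk
    have := pow_dvd_pow_of_dvd h0 e
    rwa [← pow_mul, mul_comm k e] at this
  have h2 : (p : ℤ) ^ (e * k) ∣ (m : ℤ) ^ e * c₁ := by
    rw [← heq]; exact h1.mul_right c₀
  -- decompose m
  set m' := m / p ^ l with hm'def
  have hmfact : m = p ^ l * m' := (Nat.ordProj_mul_ordCompl_eq_self m p).symm
  have hpm' : ¬ p ∣ m' := Nat.not_dvd_ordCompl hp hm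
  have hmz : (m : ℤ) ^ e = (p : ℤ) ^ (e * l) * (m' : ℤ) ^ e := by
    rw [hmfact]; push_cast; rw [mul_pow, ← pow_mul, mul_comm l e]
  rw [hmz, mul_assoc] at h2
  have hsplit : e * k = e * l + e * (k - l) := by rw [← Nat.mul_add, Nat.add_sub_cancel' hkl.le]
  rw [hsplit, pow_add] at h2
  have h3 : (p : ℤ) ^ (e * (k - l)) ∣ (m' : ℤ) ^ e * c₁ :=
    (mul_dvd_mul_iff_left (pow_ne_zero _ (by exact_mod_cast hp.ne_zero : (p:ℤ) ≠ 0))).1 h2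
  have hcop : IsCoprime ((p : ℤ) ^ (e * (k - l))) ((m' : ℤ) ^ e) :=
    ((Nat.isCoprime_iff_coprime.2 (hp.coprime_iff_not_dvd.2 hpm')).pow)
  have h4 : (p : ℤ) ^ (e * (k - l)) ∣ c₁ := hcop.dvd_of_dvd_mul_left h3
  exact (pow_dvd_pow _ (by nlinarith : e ≤ e * (k - l))).trans h4

private lemma n_dvd_m {n m : ℕ} (hn : n ≠ 0) (hm : m ≠ 0) {a₀ b₀ a₁ b₁ : ℤ}
    (hmin : MinimalPair a₁ b₁)
    (ha : (n : ℤ) ^ 4 * a₀ = (m : ℤ) ^ 4 * a₁)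
    (hb : (n : ℤ) ^ 6 * b₀ = (m : ℤ) ^ 6 * b₁) : n ∣ m := by
  rw [← Nat.factorization_le_iff_dvd hn hm]
  intro p
  by_cases hp : p.Prime
  · by_contra hlt
    push_neg at hlt
    have hpk : p ^ n.factorization p ∣ n := Nat.ordProj_dvd n p
    have h4 : (p : ℤ) ^ 4 ∣ a₁ := key_dvd hp hm 4 (by norm_num) hpk hlt ha
    have h6 : (p : ℤ) ^ 6 ∣ b₁ := key_dvd hp hm 6 (by norm_num) hpk hlt hb
    exact hmin p hp ⟨h4, h6⟩
  · simp [Nat.factorization_eq_zero_of_not_prime n hp]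

private lemma exists_min : ∀ N : ℕ, ∀ a b : ℤ, a.natAbs + b.natAbs ≤ N →
    (a ≠ 0 ∨ b ≠ 0) →
    ∃ n : ℕ, ∃ a₀ b₀ : ℤ, 0 < n ∧ MinimalPair a₀ b₀ ∧
      a = (n : ℤ) ^ 4 * a₀ ∧ b = (n : ℤ) ^ 6 * b₀ := by
  intro N
  induction N with
  | zero =>
    intro a b hle hne
    have : a = 0 ∧ b = 0 := by
      constructor <;> [skip; skip] <;>
        · rw [← Int.natAbs_eq_zero]; omega
    rcases hne with h | h
    · exact absurd this.1 h
    · exact absurd this.2 h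
  | succ N ih =>
    intro a b hle hne
    by_cases hmin : MinimalPair a b
    · exact ⟨1, a, b, one_pos, hmin, by simp, by simp⟩
    · rw [MinimalPair] at hmin
      push_neg at hmin
      obtain ⟨p, hp, hdvd4, hdvd6⟩ := hmin
      obtain ⟨a', ha'⟩ := hdvd4
      obtain ⟨b', hb'⟩ := hdvd6
      have h1 : a.natAbs = p ^ 4 * a'.natAbs := by
        rw [ha', Int.natAbs_mul, Int.natAbs_pow, Int.natAbs_natCast]
      have h2 : b.natAbs = p ^ 6 * b'.natAbs := by
        rw [hb', Int.natAbs_mul, Int.natAbs_pow, Int.natAbs_natCast]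
      have hp16 : 16 ≤ p ^ 4 := by
        calc (16 : ℕ) = 2 ^ 4 := by norm_num
        _ ≤ p ^ 4 := Nat.pow_le_pow_left hp.two_le 4
      have hp64 : 64 ≤ p ^ 6 := by
        calc (64 : ℕ) = 2 ^ 6 := by norm_num
        _ ≤ p ^ 6 := Nat.pow_le_pow_left hp.two_le 6
      have hne' : a' ≠ 0 ∨ b' ≠ 0 := by
        rcases hne with h | h
        · left; rintro rfl; exact h (by simp [ha'])
        · right; rintro rfl; exact h (by simp [hb'])
      have hA_le : a'.natAbs ≤ a.natAbs := by
        rw [h1]; exact Nat.le_mul_of_pos_left _ (by omega)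
      have hB_le : b'.natAbs ≤ b.natAbs := by
        rw [h2]; exact Nat.le_mul_of_pos_left _ (by omega)
      have hlt : a'.natAbs < a.natAbs ∨ b'.natAbs < b.natAbs := by
        rcases hne' with h | h
        · left; rw [h1]
          have : 0 < a'.natAbs := Int.natAbs_pos.2 h
          nlinarith
        · right; rw [h2]
          have : 0 < b'.natAbs := Int.natAbs_pos.2 h
          nlinarith
      obtain ⟨n, a₀, b₀, hnpos, hmin', ha0, hb0⟩ :=
        ih a' b' (by omega) hne'
      refine ⟨p * n, a₀, b₀, Nat.mul_pos hp.pos hnpos, hmin', ?_, ?_⟩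
      · rw [ha', ha0]; push_cast; ring
      · rw [hb', hb0]; push_cast; ring

/-- Every pair `(a, b)` with `4a³ ≠ 27b²` is uniquely `(n⁴a₀, n⁶b₀)` for a positive
integer `n` and a minimal pair `(a₀, b₀)`. -/
theorem exists_unique_minimal_model (a b : ℤ) (h : 4 * a ^ 3 ≠ 27 * b ^ 2) :
    ∃! x : ℕ × ℤ × ℤ, 0 < x.1 ∧ MinimalPair x.2.1 x.2.2 ∧
      a = (x.1 : ℤ) ^ 4 * x.2.1 ∧ b = (x.1 : ℤ) ^ 6 * x.2.2 := by
  have hne : a ≠ 0 ∨ b ≠ 0 := by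
    by_contra hc
    push_neg at hc
    apply h
    rw [hc.1, hc.2]; ring
  obtain ⟨n, a₀, b₀, hnpos, hmin, ha0, hb0⟩ :=
    exists_min (a.natAbs + b.natAbs) a b le_rfl hne
  refine ⟨⟨n, a₀, b₀⟩, ⟨hnpos, hmin, ha0, hb0⟩, ?_⟩
  rintro ⟨m, a₁, b₁⟩ ⟨hmpos, hmin', ha1, hb1⟩
  have ha' : (m : ℤ) ^ 4 * a₁ = (n : ℤ) ^ 4 * a₀ := by rw [← ha1, ← ha0]
  have hb' : (m : ℤ) ^ 6 * b₁ = (n : ℤ) ^ 6 * b₀ := by rw [← hb1, ← hb0]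
  have hnm : n = m :=
    Nat.dvd_antisymm
      (n_dvd_m hnpos.ne' hmpos.ne' hmin' ha'.symm hb'.symm)
      (n_dvd_m hmpos.ne' hnpos.ne' hmin ha' hb')
  subst hnm
  have hpow4 : ((n : ℤ) ^ 4) ≠ 0 := pow_ne_zero _ (by exact_mod_cast hnpos.ne')
  have hpow6 : ((n : ℤ) ^ 6) ≠ 0 := pow_ne_zero _ (by exact_mod_cast hnpos.ne')
  have ha₀ : a₁ = a₀ := mul_left_cancel₀ hpow4 ha'
  have hb₀ : b₁ = b₀ := mul_left_cancel₀ hpow6 hb'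
  simp [ha₀, hb₀]
end
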